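/- arXiv:2506.11704 — 4 statements merged into one kernel-verified Lean document; each statement's English description precedes it below -/
import Mathlib

section
/- For every integer t ≥ 9 there exists a family {T1, T2, T3} of three trees, each with exactly 2t^3+2 vertices, such that no minimum isometric-universal graph for {T1, T2, T3} is a tree; that is, every isometric-universal tree for {T1, T2, T3} has strictly more vertices than some isometric-universal graph for {T1, T2, T3}. -/
open SimpleGraph

/-- `φ` realizes `G` as an isometric subgraph of `U`: it maps edges to edges and
preserves all distances, where `edist` takes the value `⊤` between vertices in
different connected components. -/
def IsIsometricEmbedding {V W : Type} (G : SimpleGraph V) (U : SimpleGraph W)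
    (φ : V → W) : Prop :=
  (∀ u v : V, G.Adj u v → U.Adj (φ u) (φ v)) ∧
  ∀ u v : V, G.edist u v = U.edist (φ u) (φ v)

/-- `U` is an isometric-universal graph for the pair `{G₁, G₂}`: both `G₁` and `G₂`
are isomorphic to isometric subgraphs of `U`. -/
def IsIsoUniversalPair {V₁ V₂ W : Type} (G₁ : SimpleGraph V₁) (G₂ : SimpleGraph V₂)
    (U : SimpleGraph W) : Prop :=
  (∃ φ : V₁ → W, IsIsometricEmbedding G₁ U φ) ∧
  (∃ φ : V₂ → W, IsIsometricEmbedding G₂ U φ)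

/-- `U` is an isometric-universal graph for the family `{G₁, G₂, G₃}`. -/
def IsIsoUniversalTriple {V₁ V₂ V₃ W : Type} (G₁ : SimpleGraph V₁) (G₂ : SimpleGraph V₂)
    (G₃ : SimpleGraph V₃) (U : SimpleGraph W) : Prop :=
  (∃ φ : V₁ → W, IsIsometricEmbedding G₁ U φ) ∧
  (∃ φ : V₂ → W, IsIsometricEmbedding G₂ U φ) ∧
  (∃ φ : V₃ → W, IsIsometricEmbedding G₃ U φ)


namespace Stmt7

variable {V W : Type*}

/-- Lax homomorphisms map walks to walks of at most the same length. -/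
lemma exists_walk_le_of_lax {G : SimpleGraph V} {H : SimpleGraph W} {f : V → W}
    (hf : ∀ u v, G.Adj u v → H.Adj (f u) (f v) ∨ f u = f v) :
    ∀ {u v : V} (w : G.Walk u v), ∃ w' : H.Walk (f u) (f v), w'.length ≤ w.length := by
  intro u v w
  induction w with
  | nil => exact ⟨Walk.nil, by simp⟩
  | @cons a b c h p ih =>
    obtain ⟨w', hw'⟩ := ih
    rcases hf a b h with hadj | heq
    · exact ⟨Walk.cons hadj w', by simp [Walk.length_cons]; omega⟩
    · exact ⟨w'.copy heq.symm rfl, by simp [Walk.length_cons]; omega⟩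

lemma edist_le_of_lax {G : SimpleGraph V} {H : SimpleGraph W} {f : V → W}
    (hf : ∀ u v, G.Adj u v → H.Adj (f u) (f v) ∨ f u = f v) (u v : V) :
    H.edist (f u) (f v) ≤ G.edist u v := by
  by_cases h : G.edist u v = ⊤
  · simp [h]
  · obtain ⟨w, hw⟩ := exists_walk_of_edist_ne_top h
    obtain ⟨w', hw'⟩ := exists_walk_le_of_lax hf w
    calc H.edist (f u) (f v) ≤ w'.length := edist_le w'
    _ ≤ (w.length : ℕ∞) := by exact_mod_cast hw'
    _ = G.edist u v := hw

/-- pointwise potential bound along walks -/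
lemma potential_le_walk {G : SimpleGraph V} {f : V → ℕ}
    (hf : ∀ u v, G.Adj u v → f v ≤ f u + 1) :
    ∀ {u v : V} (w : G.Walk u v), f v ≤ f u + w.length := by
  intro u v w
  induction w with
  | nil => simp
  | @cons a b c h p ih =>
    have := hf a b h
    simp only [Walk.length_cons]
    omega

end Stmt7

namespace Stmt7

variable {V : Type*} {G : SimpleGraph V} {parent : V → V} {rank : V → ℕ}

/-- In a "parent forest", a path that does not start by going to the parent ascends. -/
lemma up_path (Hedge : ∀ u v, G.Adj u v →
      (u = parent v ∧ rank u < rank v) ∨ (v = parent u ∧ rank v < rank u)) :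
    ∀ {c b : V} (p : G.Walk c b), p.IsPath → parent c ∉ p.support → rank c ≤ rank b := by
  intro c b p
  induction p with
  | nil => simp
  | @cons a d b h p ih =>
    intro hp hpar
    have hd : d ∈ (Walk.cons h p).support := by simp [Walk.support_cons]
    have hdne : d ≠ parent a := fun hh => hpar (hh ▸ hd)
    rcases Hedge a d h with ⟨h1, h2⟩ | ⟨h1, h2⟩
    · -- a = parent d, rank a < rank d
      have hp' : p.IsPath := (Walk.cons_isPath_iff h p).mp hp |>.1
      have hna : a ∉ p.support := (Walk.cons_isPath_iff h p).mp hp |>.2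
      have : rank d ≤ rank b := ih hp' (by rwa [← h1])
      omega
    · exact absurd h1 hdne

lemma path_unique_of_parent (Hedge : ∀ u v, G.Adj u v →
      (u = parent v ∧ rank u < rank v) ∨ (v = parent u ∧ rank v < rank u)) :
    ∀ {v w : V} (p q : G.Walk v w), p.IsPath → q.IsPath → p = q := by
  suffices H : ∀ (N : ℕ) {v w : V}, rank v + rank w ≤ N →
      ∀ (p q : G.Walk v w), p.IsPath → q.IsPath → p = q by
    intro v w p q hp hq; exact H (rank v + rank w) le_rfl p q hp hq
  intro N
  induction N using Nat.strong_induction_on with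
  | _ N IH =>
    -- first: a "peel" for the case rank w ≤ rank v
    have peel : ∀ {v w : V}, rank v + rank w ≤ N → rank w ≤ rank v →
        ∀ (p q : G.Walk v w), p.IsPath → q.IsPath → p = q := by
      intro v w hN hrw p q hp hq
      by_cases hvw : v = w
      · subst hvw
        rw [Walk.isPath_iff_eq_nil] at hp hq
        rw [hp, hq]
      · -- both walks are cons; first step is forced to parent v
        cases p with
        | nil => exact absurd rfl hvw
        | @cons _ a _ hadj p' =>
          cases q with
          | nil => exact absurd rfl hvw
          | @cons _ b _ hadj2 q' =>
            have hp' : p'.IsPath := (Walk.cons_isPath_iff hadj p').mp hp |>.1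
            have hvp' : v ∉ p'.support := (Walk.cons_isPath_iff hadj p').mp hp |>.2
            have hq' : q'.IsPath := (Walk.cons_isPath_iff hadj2 q').mp hq |>.1
            have hvq' : v ∉ q'.support := (Walk.cons_isPath_iff hadj2 q').mp hq |>.2
            have ha : a = parent v ∧ rank a < rank v := by
              rcases Hedge v a hadj with ⟨h1, h2⟩ | ⟨h1, h2⟩
              · -- v = parent a : then p' ascends, contradiction
                have := up_path Hedge p' hp' (by rwa [← h1])
                omega
              · exact ⟨h1, h2⟩
            have hb : b = parent v ∧ rank b < rank v := by
              rcases Hedge v b hadj2 with ⟨h1, h2⟩ | ⟨h1, h2⟩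
              · have := up_path Hedge q' hq' (by rwa [← h1])
                omega
              · exact ⟨h1, h2⟩
            obtain ⟨ha1, ha2⟩ := ha
            obtain ⟨hb1, hb2⟩ := hb
            have hba : b = a := hb1.trans ha1.symm
            subst hba
            exact congrArg (Walk.cons hadj)
              (IH (rank b + rank w) (by omega) le_rfl p' q' hp' hq')
    intro v w hN p q hp hq
    rcases le_or_gt (rank w) (rank v) with h | h
    · exact peel hN h p q hp hq
    · have := peel (v := w) (w := v) (by omega) (by omega) p.reverse q.reverse
        hp.reverse hq.reverse
      have := congrArg Walk.reverse this
      simpa using this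

lemma isTree_of_parent (hconn : G.Connected) (Hedge : ∀ u v, G.Adj u v →
      (u = parent v ∧ rank u < rank v) ∨ (v = parent u ∧ rank v < rank u)) :
    G.IsTree :=
  ⟨hconn, isAcyclic_of_path_unique fun v w p q => Subtype.ext
    (path_unique_of_parent Hedge p.1 q.1 p.2 q.2)⟩

end Stmt7

namespace Stmt7

variable {V : Type*} {G : SimpleGraph V}

/-- a geodesic path -/
lemma exists_path_length_dist (hconn : G.Connected) (u v : V) :
    ∃ p : G.Walk u v, p.IsPath ∧ p.length = G.dist u v := by
  classical
  obtain ⟨w, hw⟩ := hconn.exists_walk_length_eq_dist u v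
  refine ⟨w.bypass, w.bypass_isPath, le_antisymm ?_ (dist_le _)⟩
  calc w.bypass.length ≤ w.length := Walk.length_bypass_le _
  _ = G.dist u v := hw

/-- in a tree, adjacent vertices have different distances to any root -/
lemma tree_adj_dist_ne (hT : G.IsTree) (r : V) {u v : V} (h : G.Adj u v) :
    G.dist r u ≠ G.dist r v := by
  classical
  intro heq
  obtain ⟨P, hP, hPl⟩ := exists_path_length_dist hT.isConnected r u
  by_cases hv : v ∈ P.support
  · -- then v = u, contradiction
    have h1 : G.dist r v ≤ (P.takeUntil v hv).length := dist_le _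
    have h2 : (P.takeUntil v hv).length + (P.dropUntil v hv).length = P.length := by
      rw [← Walk.length_append, Walk.take_spec]
    have h3 : (P.dropUntil v hv).length = 0 := by omega
    exact h.ne' (Walk.eq_of_length_eq_zero h3)
  · -- extend P by the edge u-v : a path r→v of length dist r u + 1
    have hPc : (P.concat h).IsPath := by
      rw [← Walk.reverse_reverse (P.concat h)]
      apply Walk.IsPath.reverse
      rw [Walk.reverse_concat]
      rw [Walk.cons_isPath_iff]
      exact ⟨hP.reverse, by simpa [Walk.support_reverse] using hv⟩
    obtain ⟨Q, hQ, hQl⟩ := exists_path_length_dist hT.isConnected r v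
    have := hT.IsAcyclic.path_unique ⟨P.concat h, hPc⟩ ⟨Q, hQ⟩
    have hlen : (P.concat h).length = Q.length := by
      rw [Subtype.ext_iff] at this; exact congrArg Walk.length this
    rw [Walk.length_concat] at hlen
    omega

lemma tree_walk_parity (hT : G.IsTree) (r : V) {x y : V} (w : G.Walk x y) :
    (G.dist r x + w.length) % 2 = G.dist r y % 2 := by
  induction w with
  | nil => simp
  | @cons a b c h p ih =>
    have hne := tree_adj_dist_ne hT r h
    have h1 : G.dist r b ≤ G.dist r a + G.dist a b := hT.isConnected.dist_triangle
    have h2 : G.dist r a ≤ G.dist r b + G.dist b a := hT.isConnected.dist_triangle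
    have hab : G.dist a b = 1 := by
      rw [← edist_eq_one_iff_adj] at h
      simp [SimpleGraph.dist, h]
    have hba : G.dist b a = 1 := by
      rw [← edist_eq_one_iff_adj] at h
      simp [SimpleGraph.dist, edist_comm, h]
    simp only [Walk.length_cons]
    omega

lemma tree_dist_parity (hT : G.IsTree) (r x y : V) :
    (G.dist r x + G.dist x y) % 2 = G.dist r y % 2 := by
  obtain ⟨w, hw⟩ := hT.isConnected.exists_walk_length_eq_dist x y
  rw [← hw]
  exact tree_walk_parity hT r w

/-- in a tree the perimeter of any triple is even -/
lemma tree_three_dist_even (hT : G.IsTree) (x y z : V) :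
    (G.dist x y + G.dist y z + G.dist x z) % 2 = 0 := by
  have h1 := tree_dist_parity hT x x y
  have h2 := tree_dist_parity hT x y z
  have h3 := tree_dist_parity hT x x z
  have h0 : G.dist x x = 0 := by simp [SimpleGraph.dist]
  omega

/-- in a tree, two distinct vertices have at most one common neighbor -/
lemma tree_common_neighbor (hT : G.IsTree) {x y w₁ w₂ : V} (hxy : x ≠ y)
    (h1 : G.Adj x w₁) (h2 : G.Adj w₁ y) (h3 : G.Adj x w₂) (h4 : G.Adj w₂ y) :
    w₁ = w₂ := by
  have hp1 : (Walk.cons h1 (Walk.cons h2 Walk.nil)).IsPath := by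
    simp [Walk.isPath_def, h1.ne, h2.ne, hxy]
  have hp2 : (Walk.cons h3 (Walk.cons h4 Walk.nil)).IsPath := by
    simp [Walk.isPath_def, h3.ne, h4.ne, hxy]
  have heq := hT.IsAcyclic.path_unique ⟨_, hp1⟩ ⟨_, hp2⟩
  rw [Subtype.ext_iff] at heq
  have h5 := congrArg Walk.support heq
  simp only [Walk.support_cons, Walk.support_nil] at h5
  exact (List.cons.injEq _ _ _ _).mp ((List.cons.injEq _ _ _ _).mp h5).2 |>.1

end Stmt7
namespace Stmt7

/-- vertex type of a double broom: a path 0..g, `a` leaves at 0, `b` leaves at `g`. -/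
abbrev BV (g a b : ℕ) : Type := Fin (g+1) ⊕ (Fin a ⊕ Fin b)

def BR (g a b : ℕ) : BV g a b → BV g a b → Prop
  | Sum.inl i, Sum.inl j => (j : ℕ) = (i : ℕ) + 1
  | Sum.inl i, Sum.inr (Sum.inl _) => (i : ℕ) = 0
  | Sum.inl i, Sum.inr (Sum.inr _) => (i : ℕ) = g
  | _, _ => False

def Broom (g a b : ℕ) : SimpleGraph (BV g a b) := SimpleGraph.fromRel (BR g a b)

variable {g a b : ℕ}

def hub0 (g a b : ℕ) : BV g a b := Sum.inl ⟨0, Nat.succ_pos g⟩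
def hubg (g a b : ℕ) : BV g a b := Sum.inl ⟨g, Nat.lt_succ_self g⟩

def bparent (g a b : ℕ) : BV g a b → BV g a b
  | Sum.inl i => Sum.inl ⟨(i : ℕ) - 1, lt_of_le_of_lt (Nat.sub_le _ _) i.isLt⟩
  | Sum.inr (Sum.inl _) => hub0 g a b
  | Sum.inr (Sum.inr _) => hubg g a b

def brank (g a b : ℕ) : BV g a b → ℕ
  | Sum.inl i => (i : ℕ)
  | Sum.inr (Sum.inl _) => 1
  | Sum.inr (Sum.inr _) => g + 1

def bpot (g a b : ℕ) : BV g a b → ℕ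
  | Sum.inl i => (i : ℕ)
  | Sum.inr (Sum.inl _) => 0
  | Sum.inr (Sum.inr _) => g

lemma broom_hedge : ∀ u v : BV g a b, (Broom g a b).Adj u v →
    (u = bparent g a b v ∧ brank g a b u < brank g a b v) ∨
    (v = bparent g a b u ∧ brank g a b v < brank g a b u) := by
  rintro (i | x | y) (j | x' | y') h <;>
    simp only [Broom, SimpleGraph.fromRel_adj, BR] at h <;>
    obtain ⟨hne, h⟩ := h <;>
    simp only [bparent, brank, hub0, hubg, Sum.inl.injEq, Fin.ext_iff]
  all_goals (try (rcases h with h | h)) <;> first | omega | exact h.elim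

lemma broom_pot_lip : ∀ u v : BV g a b, (Broom g a b).Adj u v →
    bpot g a b v ≤ bpot g a b u + 1 := by
  rintro (i | x | y) (j | x' | y') h <;>
    simp only [Broom, SimpleGraph.fromRel_adj, BR] at h <;>
    obtain ⟨hne, h⟩ := h <;>
    simp only [bpot]
  all_goals (try (rcases h with h | h)) <;> first | omega | exact h.elim

lemma broom_adj_path {n m : ℕ} (hn : n < g + 1) (hm : m < g + 1) (h : m = n + 1) :
    (Broom g a b).Adj (Sum.inl ⟨n, hn⟩) (Sum.inl ⟨m, hm⟩) := by
  simp only [Broom, SimpleGraph.fromRel_adj, BR, ne_eq, Sum.inl.injEq, Fin.ext_iff]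
  omega

lemma broom_adj_leafA (x : Fin a) :
    (Broom g a b).Adj (hub0 g a b) (Sum.inr (Sum.inl x)) := by
  simp [Broom, SimpleGraph.fromRel_adj, BR, hub0]

lemma broom_adj_leafB (y : Fin b) :
    (Broom g a b).Adj (hubg g a b) (Sum.inr (Sum.inr y)) := by
  simp [Broom, SimpleGraph.fromRel_adj, BR, hubg]

lemma broom_reach_zero : ∀ v : BV g a b, (Broom g a b).Reachable v (hub0 g a b) := by
  have aux : ∀ n (hn : n < g + 1),
      (Broom g a b).Reachable (Sum.inl ⟨n, hn⟩) (hub0 g a b) := by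
    intro n
    induction n with
    | zero => intro hn; exact Reachable.refl _
    | succ k ih =>
      intro hn
      have hk : k < g + 1 := by omega
      exact ((broom_adj_path hk hn rfl).symm.reachable).trans (ih hk)
  rintro (i | x | y)
  · exact aux i.1 i.2
  · exact (broom_adj_leafA x).reachable.symm
  · exact ((broom_adj_leafB y).reachable.symm).trans (aux g (Nat.lt_succ_self g))

lemma broom_connected : (Broom g a b).Connected := by
  rw [connected_iff]
  exact ⟨fun u v => (broom_reach_zero u).trans (broom_reach_zero v).symm,
    ⟨hub0 g a b⟩⟩

lemma broom_isTree : (Broom g a b).IsTree :=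
  isTree_of_parent broom_connected broom_hedge

lemma broom_edist_hubs : (Broom g a b).edist (hub0 g a b) (hubg g a b) = (g : ℕ∞) := by
  have aux : ∀ n (hn : n < g + 1),
      ∃ w : (Broom g a b).Walk (hub0 g a b) (Sum.inl ⟨n, hn⟩), w.length = n := by
    intro n
    induction n with
    | zero => intro hn; exact ⟨Walk.nil, rfl⟩
    | succ k ih =>
      intro hn
      have hk : k < g + 1 := by omega
      obtain ⟨w, hw⟩ := ih hk
      exact ⟨w.concat (broom_adj_path hk hn rfl), by simp [Walk.length_concat, hw]⟩
  obtain ⟨w, hw⟩ := aux g (Nat.lt_succ_self g)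
  have hle : (Broom g a b).edist (hub0 g a b) (hubg g a b) ≤ (g : ℕ∞) := by
    have := edist_le (G := Broom g a b) w
    rwa [hw] at this
  have hne : (Broom g a b).edist (hub0 g a b) (hubg g a b) ≠ ⊤ := by
    intro hh; rw [hh] at hle
    exact absurd (le_antisymm le_top hle) (by simp)
  obtain ⟨p, hp⟩ := exists_walk_of_edist_ne_top hne
  have hlb : g ≤ p.length := by
    have := potential_le_walk (broom_pot_lip (g := g) (a := a) (b := b)) p
    simpa [bpot, hub0, hubg] using this
  refine le_antisymm hle ?_
  rw [← hp]
  exact_mod_cast hlb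

lemma broom_card : Nat.card (BV g a b) = g + 1 + a + b := by
  simp [Nat.card_sum]
  omega

end Stmt7

namespace Stmt7

/-- Vertex type of the universal graph: a 13-cycle plus leaf bundles at ports 0, 3, 7. -/
abbrev YV (n : ℕ) : Type := Fin 13 ⊕ (Fin (n-1) ⊕ (Fin (n-1) ⊕ Fin (n-2)))

def UR (n : ℕ) : YV n → YV n → Prop
  | Sum.inl i, Sum.inl j => j = i + 1
  | Sum.inl i, Sum.inr (Sum.inl _) => (i : ℕ) = 0
  | Sum.inl i, Sum.inr (Sum.inr (Sum.inl _)) => (i : ℕ) = 3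
  | Sum.inl i, Sum.inr (Sum.inr (Sum.inr _)) => (i : ℕ) = 7
  | _, _ => False

def UG (n : ℕ) : SimpleGraph (YV n) := SimpleGraph.fromRel (UR n)

def r1 : Fin 13 → Fin 4 := ![0,1,2,3,2,1,0,0,0,0,0,0,0]
def r2 : Fin 13 → Fin 5 := ![3,2,1,0,1,2,3,4,3,4,4,4,4]
def r3 : Fin 13 → Fin 7 := ![6,5,4,3,2,1,1,0,1,2,3,4,5]

variable {n : ℕ}

/- adjacency helpers for UG -/
lemma UG_adj_succ {i j : Fin 13} (h : (j : ℕ) = ((i : ℕ) + 1) % 13) :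
    (UG n).Adj (Sum.inl i) (Sum.inl j) := by
  have hij : j = i + 1 := by
    apply Fin.ext
    have : ((i + 1 : Fin 13) : ℕ) = ((i : ℕ) + 1) % 13 := by
      simp [Fin.add_def]
    omega
  have hne : Sum.inl (α := Fin 13) (β := Fin (n-1) ⊕ (Fin (n-1) ⊕ Fin (n-2))) i ≠ Sum.inl j := by
    simp only [ne_eq, Sum.inl.injEq]
    intro hh
    have h13 := i.isLt
    have := congrArg Fin.val hh
    omega
  exact ⟨hne.symm ∘ Eq.symm ∘ id, by exact Or.inl hij⟩

lemma UG_adj_L1 {i : Fin 13} (h : (i : ℕ) = 0) (x : Fin (n-1)) :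
    (UG n).Adj (Sum.inl i) (Sum.inr (Sum.inl x)) :=
  ⟨by simp, Or.inl h⟩

lemma UG_adj_L2 {i : Fin 13} (h : (i : ℕ) = 3) (x : Fin (n-1)) :
    (UG n).Adj (Sum.inl i) (Sum.inr (Sum.inr (Sum.inl x))) :=
  ⟨by simp, Or.inl h⟩

lemma UG_adj_L3 {i : Fin 13} (h : (i : ℕ) = 7) (x : Fin (n-2)) :
    (UG n).Adj (Sum.inl i) (Sum.inr (Sum.inr (Sum.inr x))) :=
  ⟨by simp, Or.inl h⟩

/- broom adjacency helpers in val form -/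
lemma broom_adj_path' {g a b : ℕ} {p q : Fin (g+1)} (h : (q : ℕ) = (p : ℕ) + 1) :
    (Broom g a b).Adj (Sum.inl p) (Sum.inl q) := by
  simp only [Broom, SimpleGraph.fromRel_adj, BR, ne_eq, Sum.inl.injEq, Fin.ext_iff]
  omega

lemma broom_adj_leafA' {g a b : ℕ} {p : Fin (g+1)} (h : (p : ℕ) = 0) (x : Fin a) :
    (Broom g a b).Adj (Sum.inl p) (Sum.inr (Sum.inl x)) := by
  exact ⟨by simp, Or.inl h⟩

lemma broom_adj_leafB' {g a b : ℕ} {p : Fin (g+1)} (h : (p : ℕ) = g) (y : Fin b) :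
    (Broom g a b).Adj (Sum.inl p) (Sum.inr (Sum.inr y)) := by
  exact ⟨by simp, Or.inl h⟩

/-! ### First tree: gap 3, leaves (n-1, n-1), at ports 0 and 3 -/

def emb1 (n : ℕ) : BV 3 (n-1) (n-1) → YV n
  | Sum.inl i => Sum.inl ⟨(i : ℕ), by have := i.isLt; omega⟩
  | Sum.inr (Sum.inl x) => Sum.inr (Sum.inl x)
  | Sum.inr (Sum.inr y) => Sum.inr (Sum.inr (Sum.inl y))

def ret1 (n : ℕ) : YV n → BV 3 (n-1) (n-1)
  | Sum.inl i => Sum.inl (r1 i)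
  | Sum.inr (Sum.inl x) => Sum.inr (Sum.inl x)
  | Sum.inr (Sum.inr (Sum.inl y)) => Sum.inr (Sum.inr y)
  | Sum.inr (Sum.inr (Sum.inr _)) => Sum.inl ⟨0, by omega⟩

lemma ret1_emb1 (u : BV 3 (n-1) (n-1)) : ret1 n (emb1 n u) = u := by
  rcases u with i | x | y
  · show Sum.inl (r1 ⟨(i : ℕ), _⟩) = Sum.inl i
    congr 1
    apply Fin.ext
    have h4 := i.isLt
    have key : ∀ m : Fin 13, (m : ℕ) < 4 → (r1 m : ℕ) = (m : ℕ) := by decide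
    exact key _ (by simpa using h4)
  · rfl
  · rfl

lemma emb1_hom : ∀ u v, (Broom 3 (n-1) (n-1)).Adj u v → (UG n).Adj (emb1 n u) (emb1 n v) := by
  rintro (i | x | y) (j | x' | y') h <;>
    simp only [Broom, SimpleGraph.fromRel_adj, BR] at h <;>
    obtain ⟨hne, h⟩ := h <;>
    (try rcases h with h | h) <;>
    (try exact h.elim) <;>
    simp only [emb1]
  · exact UG_adj_succ (by have := j.isLt; simp; omega)
  · exact (UG_adj_succ (by have := i.isLt; simp; omega)).symm
  · exact UG_adj_L1 (by simpa using h) x'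
  · exact UG_adj_L2 (by have := i.isLt; simp; omega) y'
  · exact (UG_adj_L1 (by simpa using h) x).symm
  · exact (UG_adj_L2 (by have := j.isLt; simp; omega) y).symm

lemma ret1_lax : ∀ u v, (UG n).Adj u v →
    (Broom 3 (n-1) (n-1)).Adj (ret1 n u) (ret1 n v) ∨ ret1 n u = ret1 n v := by
  have key : ∀ i : Fin 13, ((r1 (i+1)) : ℕ) = (r1 i : ℕ) + 1 ∨
      ((r1 i) : ℕ) = (r1 (i+1) : ℕ) + 1 ∨ r1 (i+1) = r1 i := by decide
  rintro (i | x | y | z) (j | x' | y' | z') h <;>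
    simp only [UG, SimpleGraph.fromRel_adj, UR] at h <;>
    obtain ⟨hne, h⟩ := h <;>
    (try rcases h with h | h) <;>
    (try exact h.elim) <;>
    simp only [ret1]
  · -- cycle edge, j = i + 1
    subst h
    rcases key i with hk | hk | hk
    · exact Or.inl (broom_adj_path' hk)
    · exact Or.inl (broom_adj_path' hk).symm
    · exact Or.inr (by rw [hk])
  · -- cycle edge, i = j + 1
    subst h
    rcases key j with hk | hk | hk
    · exact Or.inl (broom_adj_path' hk).symm
    · exact Or.inl (broom_adj_path' hk)
    · exact Or.inr (by rw [hk])
  · -- port 0 – L1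
    refine Or.inl (broom_adj_leafA' ?_ x')
    have : i = (0 : Fin 13) := Fin.ext (by simpa using h)
    subst this; decide
  · -- port 3 – L2
    refine Or.inl (broom_adj_leafB' ?_ y')
    have : i = (3 : Fin 13) := Fin.ext (by simpa using h)
    subst this; decide
  · -- port 7 – L3 : both map—to inl (r1 7) and inl 0 : equal
    refine Or.inr ?_
    have : i = (7 : Fin 13) := Fin.ext (by simpa using h)
    subst this
    exact congrArg Sum.inl (by decide)
  · refine Or.inl (broom_adj_leafA' ?_ x).symm
    have : j = (0 : Fin 13) := Fin.ext (by simpa using h)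
    subst this; decide
  · refine Or.inl (broom_adj_leafB' ?_ y).symm
    have : j = (3 : Fin 13) := Fin.ext (by simpa using h)
    subst this; decide
  · refine Or.inr ?_
    have : j = (7 : Fin 13) := Fin.ext (by simpa using h)
    subst this
    exact congrArg Sum.inl (by decide)

end Stmt7

namespace Stmt7

variable {n : ℕ}

/-! ### Second tree: gap 4, leaves (n-1, n-2), at ports 3 and 7 -/

def emb2 (n : ℕ) : BV 4 (n-1) (n-2) → YV n
  | Sum.inl i => Sum.inl ⟨(i : ℕ) + 3, by have := i.isLt; omega⟩
  | Sum.inr (Sum.inl x) => Sum.inr (Sum.inr (Sum.inl x))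
  | Sum.inr (Sum.inr y) => Sum.inr (Sum.inr (Sum.inr y))

def ret2 (n : ℕ) : YV n → BV 4 (n-1) (n-2)
  | Sum.inl i => Sum.inl (r2 i)
  | Sum.inr (Sum.inl _) => Sum.inl ⟨3, by omega⟩
  | Sum.inr (Sum.inr (Sum.inl x)) => Sum.inr (Sum.inl x)
  | Sum.inr (Sum.inr (Sum.inr y)) => Sum.inr (Sum.inr y)

lemma ret2_emb2 (u : BV 4 (n-1) (n-2)) : ret2 n (emb2 n u) = u := by
  rcases u with i | x | y
  · show Sum.inl (r2 ⟨(i : ℕ) + 3, _⟩) = Sum.inl i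
    congr 1
    have key : ∀ m : Fin 13, ∀ i : Fin 5, (m : ℕ) = (i : ℕ) + 3 → r2 m = i := by decide
    exact key _ i rfl
  · rfl
  · rfl

lemma emb2_hom : ∀ u v, (Broom 4 (n-1) (n-2)).Adj u v → (UG n).Adj (emb2 n u) (emb2 n v) := by
  rintro (i | x | y) (j | x' | y') h <;>
    simp only [Broom, SimpleGraph.fromRel_adj, BR] at h <;>
    obtain ⟨hne, h⟩ := h <;>
    (try rcases h with h | h) <;>
    (try exact h.elim) <;>
    simp only [emb2]
  · exact UG_adj_succ (by have := j.isLt; simp; omega)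
  · exact (UG_adj_succ (by have := i.isLt; simp; omega)).symm
  · exact UG_adj_L2 (by simp; omega) x'
  · exact UG_adj_L3 (by simp; omega) y'
  · exact (UG_adj_L2 (by simp; omega) x).symm
  · exact (UG_adj_L3 (by simp; omega) y).symm

lemma ret2_lax : ∀ u v, (UG n).Adj u v →
    (Broom 4 (n-1) (n-2)).Adj (ret2 n u) (ret2 n v) ∨ ret2 n u = ret2 n v := by
  have key : ∀ i : Fin 13, ((r2 (i+1)) : ℕ) = (r2 i : ℕ) + 1 ∨
      ((r2 i) : ℕ) = (r2 (i+1) : ℕ) + 1 ∨ r2 (i+1) = r2 i := by decide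
  rintro (i | x | y | z) (j | x' | y' | z') h <;>
    simp only [UG, SimpleGraph.fromRel_adj, UR] at h <;>
    obtain ⟨hne, h⟩ := h <;>
    (try rcases h with h | h) <;>
    (try exact h.elim) <;>
    simp only [ret2]
  · subst h
    rcases key i with hk | hk | hk
    · exact Or.inl (broom_adj_path' hk)
    · exact Or.inl (broom_adj_path' hk).symm
    · exact Or.inr (by rw [hk])
  · subst h
    rcases key j with hk | hk | hk
    · exact Or.inl (broom_adj_path' hk).symm
    · exact Or.inl (broom_adj_path' hk)
    · exact Or.inr (by rw [hk])
  · -- port 0 – L1 : both to inl 3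
    refine Or.inr ?_
    have : i = (0 : Fin 13) := Fin.ext (by simpa using h)
    subst this
    exact congrArg Sum.inl (by decide)
  · -- port 3 – L2 : a-leaves
    refine Or.inl (broom_adj_leafA' ?_ y')
    have : i = (3 : Fin 13) := Fin.ext (by simpa using h)
    subst this; decide
  · -- port 7 – L3 : b-leaves
    refine Or.inl (broom_adj_leafB' ?_ z')
    have : i = (7 : Fin 13) := Fin.ext (by simpa using h)
    subst this; decide
  · refine Or.inr ?_
    have : j = (0 : Fin 13) := Fin.ext (by simpa using h)
    subst this
    exact congrArg Sum.inl (by decide)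
  · refine Or.inl (broom_adj_leafA' ?_ y).symm
    have : j = (3 : Fin 13) := Fin.ext (by simpa using h)
    subst this; decide
  · refine Or.inl (broom_adj_leafB' ?_ z).symm
    have : j = (7 : Fin 13) := Fin.ext (by simpa using h)
    subst this; decide

/-! ### Third tree: gap 6, leaves (n-2, n-3), at ports 7 and 0 -/

def emb3 (n : ℕ) : BV 6 (n-2) (n-3) → YV n
  | Sum.inl i => Sum.inl ⟨(7 + (i : ℕ)) % 13, by omega⟩
  | Sum.inr (Sum.inl x) => Sum.inr (Sum.inr (Sum.inr x))
  | Sum.inr (Sum.inr y) => Sum.inr (Sum.inl (Fin.castLE (by omega) y))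

def ret3 (n : ℕ) : YV n → BV 6 (n-2) (n-3)
  | Sum.inl i => Sum.inl (r3 i)
  | Sum.inr (Sum.inl x) =>
      if h : (x : ℕ) < n - 3 then Sum.inr (Sum.inr (⟨(x : ℕ), h⟩ : Fin (n-3)))
      else Sum.inl ⟨6, by omega⟩
  | Sum.inr (Sum.inr (Sum.inl _)) => Sum.inl ⟨3, by omega⟩
  | Sum.inr (Sum.inr (Sum.inr z)) => Sum.inr (Sum.inl z)

lemma ret3_emb3 (u : BV 6 (n-2) (n-3)) : ret3 n (emb3 n u) = u := by
  rcases u with i | x | y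
  · show Sum.inl (r3 ⟨(7 + (i : ℕ)) % 13, _⟩) = Sum.inl i
    congr 1
    have key : ∀ m : Fin 13, ∀ i : Fin 7, (m : ℕ) = (7 + (i : ℕ)) % 13 → r3 m = i := by decide
    exact key _ i rfl
  · rfl
  · show (if h : ((Fin.castLE _ y : Fin (n-1)) : ℕ) < n - 3 then _ else _) = _
    rw [dif_pos (by simpa using y.isLt)]
    congr 1

lemma emb3_hom : ∀ u v, (Broom 6 (n-2) (n-3)).Adj u v → (UG n).Adj (emb3 n u) (emb3 n v) := by
  rintro (i | x | y) (j | x' | y') h <;>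
    simp only [Broom, SimpleGraph.fromRel_adj, BR] at h <;>
    obtain ⟨hne, h⟩ := h <;>
    (try rcases h with h | h) <;>
    (try exact h.elim) <;>
    simp only [emb3]
  · exact UG_adj_succ (by have := j.isLt; have := i.isLt; simp; omega)
  · exact (UG_adj_succ (by have := i.isLt; have := j.isLt; simp; omega)).symm
  · exact UG_adj_L3 (by simp; omega) x'
  · exact UG_adj_L1 (by have := i.isLt; simp; omega) (Fin.castLE (by omega) y')
  · exact (UG_adj_L3 (by simp; omega) x).symm
  · exact (UG_adj_L1 (by have := j.isLt; simp; omega) (Fin.castLE (by omega) y)).symm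

lemma ret3_lax : ∀ u v, (UG n).Adj u v →
    (Broom 6 (n-2) (n-3)).Adj (ret3 n u) (ret3 n v) ∨ ret3 n u = ret3 n v := by
  have key : ∀ i : Fin 13, ((r3 (i+1)) : ℕ) = (r3 i : ℕ) + 1 ∨
      ((r3 i) : ℕ) = (r3 (i+1) : ℕ) + 1 ∨ r3 (i+1) = r3 i := by decide
  rintro (i | x | y | z) (j | x' | y' | z') h <;>
    simp only [UG, SimpleGraph.fromRel_adj, UR] at h <;>
    obtain ⟨hne, h⟩ := h <;>
    (try rcases h with h | h) <;>
    (try exact h.elim) <;>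
    simp only [ret3]
  · subst h
    rcases key i with hk | hk | hk
    · exact Or.inl (broom_adj_path' hk)
    · exact Or.inl (broom_adj_path' hk).symm
    · exact Or.inr (by rw [hk])
  · subst h
    rcases key j with hk | hk | hk
    · exact Or.inl (broom_adj_path' hk).symm
    · exact Or.inl (broom_adj_path' hk)
    · exact Or.inr (by rw [hk])
  · -- port 0 – L1 : r3 0 = 6 = hub g; leaf goes to b-leaf or to inl 6
    have : i = (0 : Fin 13) := Fin.ext (by simpa using h)
    subst this
    by_cases hx : (x' : ℕ) < n - 3
    · rw [dif_pos hx]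
      exact Or.inl (broom_adj_leafB' (by decide) _)
    · rw [dif_neg hx]
      refine Or.inr ?_
      congr 1
  · -- port 3 – L2 : both to inl 3
    refine Or.inr ?_
    have : i = (3 : Fin 13) := Fin.ext (by simpa using h)
    subst this
    exact congrArg Sum.inl (by decide)
  · -- port 7 – L3 : a-leaves at hub 0
    refine Or.inl (broom_adj_leafA' ?_ z')
    have : i = (7 : Fin 13) := Fin.ext (by simpa using h)
    subst this; decide
  · have : j = (0 : Fin 13) := Fin.ext (by simpa using h)
    subst this
    by_cases hx : (x : ℕ) < n - 3
    · rw [dif_pos hx]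
      exact Or.inl (broom_adj_leafB' (by decide) _).symm
    · rw [dif_neg hx]
      refine Or.inr ?_
      congr 1
  · refine Or.inr ?_
    have : j = (3 : Fin 13) := Fin.ext (by simpa using h)
    subst this
    exact (congrArg Sum.inl (by decide)).symm
  · refine Or.inl (broom_adj_leafA' ?_ z).symm
    have : j = (7 : Fin 13) := Fin.ext (by simpa using h)
    subst this; decide

/-! ### assembly -/

lemma isometric_of_retract {V W : Type} {G : SimpleGraph V} {H : SimpleGraph W}
    {φ : V → W} {ρ : W → V}
    (hφ : ∀ u v, G.Adj u v → H.Adj (φ u) (φ v))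
    (hρ : ∀ u v, H.Adj u v → G.Adj (ρ u) (ρ v) ∨ ρ u = ρ v)
    (hret : ∀ u, ρ (φ u) = u) : IsIsometricEmbedding G H φ := by
  refine ⟨hφ, fun u v => le_antisymm ?_ ?_⟩
  · have := edist_le_of_lax hρ (φ u) (φ v)
    rwa [hret, hret] at this
  · exact edist_le_of_lax (fun u v h => Or.inl (hφ u v h)) u v

lemma UG_universal (n : ℕ) :
    IsIsoUniversalTriple (Broom 3 (n-1) (n-1)) (Broom 4 (n-1) (n-2))
      (Broom 6 (n-2) (n-3)) (UG n) :=
  ⟨⟨emb1 n, isometric_of_retract emb1_hom ret1_lax ret1_emb1⟩,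
   ⟨emb2 n, isometric_of_retract emb2_hom ret2_lax ret2_emb2⟩,
   ⟨emb3 n, isometric_of_retract emb3_hom ret3_lax ret3_emb3⟩⟩

lemma UG_card (n : ℕ) (hn : 3 ≤ n) : Nat.card (YV n) = 3 * n + 9 := by
  simp [Nat.card_sum]
  omega

end Stmt7

namespace Stmt7

variable {X : Type} {S : SimpleGraph X}

lemma dist_ne_of {u v : X} {k : ℕ} (h : S.dist u v = k) (hk : k ≠ 0) : u ≠ v := by
  intro he
  rw [he, SimpleGraph.dist_self] at h
  exact hk h.symm

/-- Among six vertices forming pairs at distances 3, 4, 6 in a tree there are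
four pairwise distinct ones. -/
lemma four_distinct (hS : S.IsTree) {x₁ y₁ x₂ y₂ x₃ y₃ : X}
    (d₁ : S.dist x₁ y₁ = 3) (d₂ : S.dist x₂ y₂ = 4) (d₃ : S.dist x₃ y₃ = 6) :
    ∃ a b c d : X,
      (a = x₁ ∨ a = y₁ ∨ a = x₂ ∨ a = y₂ ∨ a = x₃ ∨ a = y₃) ∧
      (b = x₁ ∨ b = y₁ ∨ b = x₂ ∨ b = y₂ ∨ b = x₃ ∨ b = y₃) ∧
      (c = x₁ ∨ c = y₁ ∨ c = x₂ ∨ c = y₂ ∨ c = x₃ ∨ c = y₃) ∧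
      (d = x₁ ∨ d = y₁ ∨ d = x₂ ∨ d = y₂ ∨ d = x₃ ∨ d = y₃) ∧
      a ≠ b ∧ a ≠ c ∧ a ≠ d ∧ b ≠ c ∧ b ≠ d ∧ c ≠ d := by
  have h12 : x₁ ≠ y₁ := dist_ne_of d₁ (by norm_num)
  have h22 : x₂ ≠ y₂ := dist_ne_of d₂ (by norm_num)
  have h32 : x₃ ≠ y₃ := dist_ne_of d₃ (by norm_num)
  -- step 1 : get w ∈ {x₂,y₂} outside {x₁,y₁}
  obtain ⟨w, w', hw, hww', hwx, hwy, hdw⟩ :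
      ∃ w w' : X, (w = x₂ ∨ w = y₂) ∧ w' ≠ w ∧ w ≠ x₁ ∧ w ≠ y₁ ∧
        (S.dist x₂ y₂ = 4 ∧ ((w = x₂ ∧ w' = y₂) ∨ (w = y₂ ∧ w' = x₂))) := by
    by_cases ha : x₂ ≠ x₁ ∧ x₂ ≠ y₁
    · exact ⟨x₂, y₂, Or.inl rfl, h22.symm, ha.1, ha.2, d₂, Or.inl ⟨rfl, rfl⟩⟩
    · by_cases hb : y₂ ≠ x₁ ∧ y₂ ≠ y₁
      · exact ⟨y₂, x₂, Or.inr rfl, h22, hb.1, hb.2, d₂, Or.inr ⟨rfl, rfl⟩⟩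
      · exfalso
        push_neg at ha hb
        by_cases hax : x₂ = x₁
        · by_cases hby : y₂ = y₁
          · rw [hax, hby] at d₂; omega
          · have hbx : y₂ = x₁ := by
              by_cases h' : y₂ = x₁
              · exact h'
              · exact ((hby (hb h')).elim)
            exact h22 (hax.trans hbx.symm)
        · have hay : x₂ = y₁ := by
            by_cases h' : x₂ = x₁
            · exact absurd h' hax
            · exact ha h'
          by_cases hbx : y₂ = x₁
          · rw [hay, hbx, SimpleGraph.dist_comm] at d₂; omega
          · have hby : y₂ = y₁ := hb hbx
            exact h22 (hay.trans hby.symm)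
  -- step 2
  by_cases hc : x₃ ≠ x₁ ∧ x₃ ≠ y₁ ∧ x₃ ≠ w
  · refine ⟨x₁, y₁, w, x₃, Or.inl rfl, Or.inr (Or.inl rfl), ?_,
      Or.inr (Or.inr (Or.inr (Or.inr (Or.inl rfl)))), ?_, ?_, ?_, ?_, ?_, ?_⟩
    · rcases hw with h | h <;> [exact Or.inr (Or.inr (Or.inl h));
        exact Or.inr (Or.inr (Or.inr (Or.inl h)))]
    · exact h12
    · exact fun h => hwx h.symm
    · exact fun h => hc.1 h.symm
    · exact fun h => hwy h.symm
    · exact fun h => hc.2.1 h.symm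
    · exact fun h => hc.2.2 h.symm
  · push_neg at hc
    by_cases hd : y₃ ≠ x₁ ∧ y₃ ≠ y₁ ∧ y₃ ≠ w
    · refine ⟨x₁, y₁, w, y₃, Or.inl rfl, Or.inr (Or.inl rfl), ?_,
        Or.inr (Or.inr (Or.inr (Or.inr (Or.inr rfl)))), ?_, ?_, ?_, ?_, ?_, ?_⟩
      · rcases hw with h | h <;> [exact Or.inr (Or.inr (Or.inl h));
          exact Or.inr (Or.inr (Or.inr (Or.inl h)))]
      · exact h12
      · exact fun h => hwx h.symm
      · exact fun h => hd.1 h.symm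
      · exact fun h => hwy h.symm
      · exact fun h => hd.2.1 h.symm
      · exact fun h => hd.2.2 h.symm
    · push_neg at hd
      by_cases he : w' ≠ x₁ ∧ w' ≠ y₁ ∧ w' ≠ w
      · refine ⟨x₁, y₁, w, w', Or.inl rfl, Or.inr (Or.inl rfl), ?_, ?_, ?_, ?_, ?_, ?_, ?_, ?_⟩
        · rcases hw with h | h <;> [exact Or.inr (Or.inr (Or.inl h));
            exact Or.inr (Or.inr (Or.inr (Or.inl h)))]
        · rcases hdw.2 with ⟨h1, h2⟩ | ⟨h1, h2⟩ <;>
            [exact Or.inr (Or.inr (Or.inr (Or.inl h2)));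
             exact Or.inr (Or.inr (Or.inl h2))]
        · exact h12
        · exact fun h => hwx h.symm
        · exact fun h => he.1 h.symm
        · exact fun h => hwy h.symm
        · exact fun h => he.2.1 h.symm
        · exact fun h => he.2.2 h.symm
      · exfalso
        push_neg at he
        -- everything lives on {x₁, y₁, w}
        -- first: dist x₁ w = 4 or dist y₁ w = 4
        have hD : S.dist x₁ w = 4 ∨ S.dist y₁ w = 4 := by
          have hdist : S.dist w w' = 4 := by
            rcases hdw.2 with ⟨h1, h2⟩ | ⟨h1, h2⟩
            · rw [h1, h2]; exact hdw.1
            · rw [h1, h2, SimpleGraph.dist_comm]; exact hdw.1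
          have hw' : w' = x₁ ∨ w' = y₁ := by
            by_cases h' : w' = x₁
            · exact Or.inl h'
            · by_cases h'' : w' = y₁
              · exact Or.inr h''
              · exact absurd (he h' h'') (by simpa using hww')
          rcases hw' with h' | h'
          · left; rw [← h', SimpleGraph.dist_comm]; exact hdist
          · right; rw [← h', SimpleGraph.dist_comm]; exact hdist
        -- second: dist x₁ w = 6 or dist y₁ w = 6
        have hE : S.dist x₁ w = 6 ∨ S.dist y₁ w = 6 := by
          have hx3 : x₃ = x₁ ∨ x₃ = y₁ ∨ x₃ = w := by
            by_cases a1 : x₃ = x₁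
            · exact Or.inl a1
            by_cases a2 : x₃ = y₁
            · exact Or.inr (Or.inl a2)
            exact Or.inr (Or.inr (hc a1 a2))
          have hy3 : y₃ = x₁ ∨ y₃ = y₁ ∨ y₃ = w := by
            by_cases a1 : y₃ = x₁
            · exact Or.inl a1
            by_cases a2 : y₃ = y₁
            · exact Or.inr (Or.inl a2)
            exact Or.inr (Or.inr (hd a1 a2))
          rcases hx3 with h1 | h1 | h1 <;> rcases hy3 with h2 | h2 | h2
          · exact absurd (h1.trans h2.symm) h32
          · rw [h1, h2] at d₃; omega
          · left; rw [← h1, ← h2]; exact d₃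
          · rw [h1, h2, SimpleGraph.dist_comm] at d₃; omega
          · exact absurd (h1.trans h2.symm) h32
          · right; rw [← h1, ← h2]; exact d₃
          · left; rw [← h2, ← h1, SimpleGraph.dist_comm]; exact d₃
          · right; rw [← h2, ← h1, SimpleGraph.dist_comm]; exact d₃
          · exact absurd (h1.trans h2.symm) h32
        have hpar := tree_three_dist_even hS x₁ y₁ w
        rcases hD with hD | hD <;> rcases hE with hE | hE <;> omega

lemma card_bound [Fintype X] [DecidableRel S.Adj] (hS : S.IsTree)
    {h₁ h₂ h₃ h₄ : X} (h12 : h₁ ≠ h₂) (h13 : h₁ ≠ h₃) (h14 : h₁ ≠ h₄)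
    (h23 : h₂ ≠ h₃) (h24 : h₂ ≠ h₄) (h34 : h₃ ≠ h₄) {m : ℕ}
    (hdeg : ∀ v, (v = h₁ ∨ v = h₂ ∨ v = h₃ ∨ v = h₄) →
      m ≤ (Finset.univ.filter (S.Adj v ·)).card) :
    4 * m ≤ Fintype.card X + 6 := by
  classical
  set N : X → Finset X := fun v => Finset.univ.filter (S.Adj v ·) with hN
  have hint : ∀ v w : X, v ≠ w → (N v ∩ N w).card ≤ 1 := by
    intro v w hvw
    refine Finset.card_le_one.mpr ?_
    intro a ha b hb
    simp only [hN, Finset.mem_inter, Finset.mem_filter, Finset.mem_univ, true_and] at ha hb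
    exact tree_common_neighbor hS hvw ha.1 ha.2.symm hb.1 hb.2.symm
  have e12 := Finset.card_union_add_card_inter (N h₁) (N h₂)
  have i12 := hint h₁ h₂ h12
  have e3 := Finset.card_union_add_card_inter (N h₁ ∪ N h₂) (N h₃)
  have i3 : ((N h₁ ∪ N h₂) ∩ N h₃).card ≤ 2 := by
    rw [Finset.union_inter_distrib_right]
    have := Finset.card_union_le (N h₁ ∩ N h₃) (N h₂ ∩ N h₃)
    have a1 := hint h₁ h₃ h13
    have a2 := hint h₂ h₃ h23
    omega
  have e4 := Finset.card_union_add_card_inter (N h₁ ∪ N h₂ ∪ N h₃) (N h₄)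
  have i4 : ((N h₁ ∪ N h₂ ∪ N h₃) ∩ N h₄).card ≤ 3 := by
    rw [Finset.union_inter_distrib_right, Finset.union_inter_distrib_right]
    have u1 := Finset.card_union_le (N h₁ ∩ N h₄ ∪ N h₂ ∩ N h₄) (N h₃ ∩ N h₄)
    have u2 := Finset.card_union_le (N h₁ ∩ N h₄) (N h₂ ∩ N h₄)
    have a1 := hint h₁ h₄ h14
    have a2 := hint h₂ h₄ h24
    have a3 := hint h₃ h₄ h34
    omega
  have htot : (N h₁ ∪ N h₂ ∪ N h₃ ∪ N h₄).card ≤ Fintype.card X := by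
    have := Finset.card_le_univ (N h₁ ∪ N h₂ ∪ N h₃ ∪ N h₄)
    simpa using this
  have b1 : m ≤ (N h₁).card := hdeg h₁ (Or.inl rfl)
  have b2 : m ≤ (N h₂).card := hdeg h₂ (Or.inr (Or.inl rfl))
  have b3 : m ≤ (N h₃).card := hdeg h₃ (Or.inr (Or.inr (Or.inl rfl)))
  have b4 : m ≤ (N h₄).card := hdeg h₄ (Or.inr (Or.inr (Or.inr rfl)))
  omega

lemma emb_injective {V W : Type} {G : SimpleGraph V} {U : SimpleGraph W} {φ : V → W}
    (h : IsIsometricEmbedding G U φ) : Function.Injective φ := by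
  intro u v heq
  by_contra hne
  have h1 : G.edist u v ≠ 0 := by
    simp only [ne_eq, SimpleGraph.edist_eq_zero_iff]
    exact hne
  rw [h.2 u v, heq, SimpleGraph.edist_self] at h1
  exact h1 rfl

end Stmt7

namespace Stmt7

variable {X : Type} {S : SimpleGraph X}

lemma hub0_deg [Fintype X] [DecidableRel S.Adj] {g p q : ℕ} {φ : BV g p q → X}
    (hφ : IsIsometricEmbedding (Broom g p q) S φ) {m : ℕ} (hm : m ≤ p) :
    m ≤ (Finset.univ.filter (S.Adj (φ (hub0 g p q)) ·)).card := by
  classical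
  set F : Fin m → X := fun j => φ (Sum.inr (Sum.inl (Fin.castLE hm j))) with hF
  have hinj : Function.Injective F := by
    intro i j h
    have h2 := emb_injective hφ h
    have h3 : Fin.castLE hm i = Fin.castLE hm j := by
      simpa using h2
    exact Fin.castLE_injective hm h3
  have hsub : Finset.univ.image F ⊆ Finset.univ.filter (S.Adj (φ (hub0 g p q)) ·) := by
    intro x hx
    simp only [Finset.mem_image, Finset.mem_univ, true_and] at hx
    obtain ⟨j, rfl⟩ := hx
    simp only [Finset.mem_filter, Finset.mem_univ, true_and]
    exact hφ.1 _ _ (broom_adj_leafA _)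
  calc m = (Finset.univ.image F).card := by
        rw [Finset.card_image_of_injective _ hinj, Finset.card_univ, Fintype.card_fin]
  _ ≤ _ := Finset.card_le_card hsub

lemma hubg_deg [Fintype X] [DecidableRel S.Adj] {g p q : ℕ} {φ : BV g p q → X}
    (hφ : IsIsometricEmbedding (Broom g p q) S φ) {m : ℕ} (hm : m ≤ q) :
    m ≤ (Finset.univ.filter (S.Adj (φ (hubg g p q)) ·)).card := by
  classical
  set F : Fin m → X := fun j => φ (Sum.inr (Sum.inr (Fin.castLE hm j))) with hF
  have hinj : Function.Injective F := by
    intro i j h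
    have h2 := emb_injective hφ h
    have h3 : Fin.castLE hm i = Fin.castLE hm j := by
      simpa using h2
    exact Fin.castLE_injective hm h3
  have hsub : Finset.univ.image F ⊆ Finset.univ.filter (S.Adj (φ (hubg g p q)) ·) := by
    intro x hx
    simp only [Finset.mem_image, Finset.mem_univ, true_and] at hx
    obtain ⟨j, rfl⟩ := hx
    simp only [Finset.mem_filter, Finset.mem_univ, true_and]
    exact hφ.1 _ _ (broom_adj_leafB _)
  calc m = (Finset.univ.image F).card := by
        rw [Finset.card_image_of_injective _ hinj, Finset.card_univ, Fintype.card_fin]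
  _ ≤ _ := Finset.card_le_card hsub

lemma hub_dist {g p q : ℕ} {φ : BV g p q → X}
    (hφ : IsIsometricEmbedding (Broom g p q) S φ) :
    S.dist (φ (hub0 g p q)) (φ (hubg g p q)) = g := by
  have h := hφ.2 (hub0 g p q) (hubg g p q)
  rw [broom_edist_hubs] at h
  simp [SimpleGraph.dist, ← h]

end Stmt7

open Stmt7

/-- For every `t ≥ 9` there are three trees, each with exactly
`2t³ + 2` vertices, such that every isometric-universal tree for the family has
strictly more vertices than some isometric-universal graph for it. -/
theorem stmt_7 (t : ℕ) (ht : 9 ≤ t) :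
    ∃ (V₁ V₂ V₃ : Type) (_ : Fintype V₁) (_ : Fintype V₂) (_ : Fintype V₃)
      (T₁ : SimpleGraph V₁) (T₂ : SimpleGraph V₂) (T₃ : SimpleGraph V₃),
      T₁.IsTree ∧ T₂.IsTree ∧ T₃.IsTree ∧
      Nat.card V₁ = 2 * t ^ 3 + 2 ∧ Nat.card V₂ = 2 * t ^ 3 + 2 ∧
      Nat.card V₃ = 2 * t ^ 3 + 2 ∧
      ∀ (X : Type) (_ : Finite X) (S : SimpleGraph X), S.IsTree →
        IsIsoUniversalTriple T₁ T₂ T₃ S →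
        ∃ (Y : Type) (_ : Finite Y) (U : SimpleGraph Y),
          IsIsoUniversalTriple T₁ T₂ T₃ U ∧ Nat.card Y < Nat.card X := by
  have hn : 729 ≤ t ^ 3 := by
    calc 729 = 9 ^ 3 := by norm_num
    _ ≤ t ^ 3 := Nat.pow_le_pow_left ht 3
  set n := t ^ 3 with hdefn
  refine ⟨BV 3 (n-1) (n-1), BV 4 (n-1) (n-2), BV 6 (n-2) (n-3),
    inferInstance, inferInstance, inferInstance,
    Broom 3 (n-1) (n-1), Broom 4 (n-1) (n-2), Broom 6 (n-2) (n-3),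
    broom_isTree, broom_isTree, broom_isTree, ?_, ?_, ?_, ?_⟩
  · rw [broom_card]; omega
  · rw [broom_card]; omega
  · rw [broom_card]; omega
  intro X _ S hS htriple
  refine ⟨YV n, inferInstance, UG n, UG_universal n, ?_⟩
  rw [UG_card n (by omega)]
  obtain ⟨⟨φ₁, hφ₁⟩, ⟨φ₂, hφ₂⟩, ⟨φ₃, hφ₃⟩⟩ := htriple
  have hd1 := hub_dist hφ₁
  have hd2 := hub_dist hφ₂
  have hd3 := hub_dist hφ₃
  obtain ⟨a, b, c, d, pa, pb, pc, pd, hab, hac, had, hbc, hbd, hcd⟩ :=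
    four_distinct hS hd1 hd2 hd3
  classical
  haveI : Fintype X := Fintype.ofFinite X
  have hdeg : ∀ v, (v = a ∨ v = b ∨ v = c ∨ v = d) →
      (n - 3) ≤ (Finset.univ.filter (S.Adj v ·)).card := by
    have key : ∀ v,
        (v = φ₁ (hub0 3 (n-1) (n-1)) ∨ v = φ₁ (hubg 3 (n-1) (n-1)) ∨
         v = φ₂ (hub0 4 (n-1) (n-2)) ∨ v = φ₂ (hubg 4 (n-1) (n-2)) ∨
         v = φ₃ (hub0 6 (n-2) (n-3)) ∨ v = φ₃ (hubg 6 (n-2) (n-3))) →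
        (n - 3) ≤ (Finset.univ.filter (S.Adj v ·)).card := by
      rintro v (rfl | rfl | rfl | rfl | rfl | rfl)
      · exact hub0_deg hφ₁ (by omega)
      · exact hubg_deg hφ₁ (by omega)
      · exact hub0_deg hφ₂ (by omega)
      · exact hubg_deg hφ₂ (by omega)
      · exact hub0_deg hφ₃ (by omega)
      · exact hubg_deg hφ₃ (by omega)
    rintro v (rfl | rfl | rfl | rfl)
    · exact key _ pa
    · exact key _ pb
    · exact key _ pc
    · exact key _ pd
  have hcb := card_bound hS hab hac had hbc hbd hcd hdeg
  rw [Nat.card_eq_fintype_card]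
  omega
end

section
/- Let t ≥ 3 be an integer, and for i ∈ {1,2,3} let T_i be the tree obtained from the disjoint union of a type-i star and a type-(1+(i mod 3)) star by adding an edge between their centers. Then the graph obtained from the disjoint union of a type-1 star, a type-2 star and a type-3 star by adding the three edges of a triangle on their three centers is an isometric-universal graph for {T1, T2, T3}, and it has exactly 3(t^3+1) vertices. -/
open SimpleGraph

/-- The subdivided star with `b` branches of length `ℓ`: the star `K_{1,b}` in which
every edge is replaced by a path of length `ℓ`. The center is the vertex `none`, and
`some (j, r)` is the vertex of branch `j` at distance `r + 1` from the center. -/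
def SubdividedStar (b ℓ : ℕ) : SimpleGraph (Option (Fin b × Fin ℓ)) :=
  SimpleGraph.fromRel fun x y =>
    match x, y with
    | none, some (_, r) => (r : ℕ) = 0
    | some (j, r), some (j', r') => j = j' ∧ (r' : ℕ) = (r : ℕ) + 1
    | _, _ => False

/-- The type-`i` star (for the parameter `t`): the star `K_{1,t^i}` in which every edge
is replaced by a path of length `t^(3-i)`. It has `t³ + 1` vertices and its center is
the vertex `none`. -/
def typeStar (t i : ℕ) : SimpleGraph (Option (Fin (t ^ i) × Fin (t ^ (3 - i)))) :=
  SubdividedStar (t ^ i) (t ^ (3 - i))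

/-- The disjoint union of `G` and `H` together with an edge joining `a ∈ V(G)` to
`b ∈ V(H)`. -/
def linkCenters {A B : Type} (G : SimpleGraph A) (H : SimpleGraph B) (a : A) (b : B) :
    SimpleGraph (A ⊕ B) :=
  SimpleGraph.fromRel fun x y =>
    match x, y with
    | Sum.inl u, Sum.inl v => G.Adj u v
    | Sum.inr u, Sum.inr v => H.Adj u v
    | Sum.inl u, Sum.inr v => u = a ∧ v = b
    | _, _ => False

/-- The tree `T_i` of the paper: the disjoint union of a type-`i` star and a
type-`(1 + (i mod 3))` star with an edge between their centers. -/
def paperTree (t i : ℕ) :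
    SimpleGraph (Option (Fin (t ^ i) × Fin (t ^ (3 - i))) ⊕
      Option (Fin (t ^ (1 + i % 3)) × Fin (t ^ (3 - (1 + i % 3))))) :=
  linkCenters (typeStar t i) (typeStar t (1 + i % 3)) none none

/-- The vertex set of the graph made of one star of each type plus a triangle on the
three centers. -/
abbrev TriStarVerts (t : ℕ) : Type :=
  (Option (Fin (t ^ 1) × Fin (t ^ (3 - 1))) ⊕ Option (Fin (t ^ 2) × Fin (t ^ (3 - 2)))) ⊕
    Option (Fin (t ^ 3) × Fin (t ^ (3 - 3)))

/-- The disjoint union of a type-1, a type-2 and a type-3 star together with the three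
edges of a triangle on their centers. -/
def triStar (t : ℕ) : SimpleGraph (TriStarVerts t) :=
  linkCenters (linkCenters (typeStar t 1) (typeStar t 2) none none) (typeStar t 3)
      (Sum.inr none) none ⊔
    SimpleGraph.fromEdgeSet {s(Sum.inl (Sum.inl none), Sum.inr none)}

/-! ### Auxiliary lemmas -/

lemma edist_map_le {V W : Type} {G : SimpleGraph V} {U : SimpleGraph W}
    (ψ : W → V) (hψ : ∀ a b, U.Adj a b → ψ a = ψ b ∨ G.Adj (ψ a) (ψ b)) (a b : W) :
    G.edist (ψ a) (ψ b) ≤ U.edist a b := by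
  by_cases h : U.edist a b = ⊤
  · simp [h]
  obtain ⟨p, hp⟩ := SimpleGraph.exists_walk_of_edist_ne_top h
  rw [← hp]
  clear hp h
  induction p with
  | nil => simp
  | @cons u x v h p ih =>
    refine le_trans (G.edist_triangle (v := ψ x)) ?_
    have h1 : G.edist (ψ u) (ψ x) ≤ 1 := by
      rcases hψ _ _ h with he | ha
      · simp [he]
      · exact le_of_eq (SimpleGraph.edist_eq_one_iff_adj.mpr ha)
    calc G.edist (ψ u) (ψ x) + G.edist (ψ x) (ψ v) ≤ 1 + p.length := add_le_add h1 ih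
    _ = (p.cons h).length := by simp [SimpleGraph.Walk.length_cons]; ring

lemma isometric_of_retract {V W : Type} {G : SimpleGraph V} {U : SimpleGraph W}
    (φ : V → W) (ψ : W → V)
    (hφ : ∀ u v, G.Adj u v → U.Adj (φ u) (φ v))
    (hid : ∀ v, ψ (φ v) = v)
    (hψ : ∀ a b, U.Adj a b → ψ a = ψ b ∨ G.Adj (ψ a) (ψ b)) :
    IsIsometricEmbedding G U φ := by
  refine ⟨hφ, fun u v => le_antisymm ?_ ?_⟩
  · have := edist_map_le ψ hψ (φ u) (φ v); rwa [hid, hid] at this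
  · exact edist_map_le φ (fun a b h => Or.inr (hφ a b h)) u v

lemma star_adj_none_none (b ℓ : ℕ) : ¬ (SubdividedStar b ℓ).Adj none none := by
  simp [SubdividedStar, SimpleGraph.fromRel_adj]

@[simp] lemma star_adj_none_some (b ℓ : ℕ) (p : Fin b × Fin ℓ) :
    (SubdividedStar b ℓ).Adj none (some p) ↔ (p.2 : ℕ) = 0 := by
  obtain ⟨j, r⟩ := p
  simp [SubdividedStar, SimpleGraph.fromRel_adj]

@[simp] lemma star_adj_some_none (b ℓ : ℕ) (p : Fin b × Fin ℓ) :
    (SubdividedStar b ℓ).Adj (some p) none ↔ (p.2 : ℕ) = 0 := by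
  rw [SimpleGraph.adj_comm]; exact star_adj_none_some b ℓ p

@[simp] lemma star_adj_some_some (b ℓ : ℕ) (p q : Fin b × Fin ℓ) :
    (SubdividedStar b ℓ).Adj (some p) (some q) ↔
      p.1 = q.1 ∧ ((q.2 : ℕ) = (p.2 : ℕ) + 1 ∨ (p.2 : ℕ) = (q.2 : ℕ) + 1) := by
  obtain ⟨j, r⟩ := p; obtain ⟨j', r'⟩ := q
  simp only [SubdividedStar, SimpleGraph.fromRel_adj]
  constructor
  · rintro ⟨hne, ⟨rfl, h⟩ | ⟨rfl, h⟩⟩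
    · exact ⟨rfl, Or.inl h⟩
    · exact ⟨rfl, Or.inr h⟩
  · rintro ⟨rfl, h | h⟩
    · exact ⟨by simp; intro hr; subst hr; omega, Or.inl ⟨rfl, h⟩⟩
    · exact ⟨by simp; intro hr; subst hr; omega, Or.inr ⟨rfl, h⟩⟩

@[simp] lemma link_adj_inl_inl {A B : Type} (G : SimpleGraph A) (H : SimpleGraph B) (a : A) (b : B)
    (u v : A) : (linkCenters G H a b).Adj (.inl u) (.inl v) ↔ G.Adj u v := by
  simp [linkCenters, SimpleGraph.fromRel_adj, SimpleGraph.adj_comm (G := G) u v]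
  intro h; rintro rfl; exact (G.irrefl h).elim

@[simp] lemma link_adj_inr_inr {A B : Type} (G : SimpleGraph A) (H : SimpleGraph B) (a : A) (b : B)
    (u v : B) : (linkCenters G H a b).Adj (.inr u) (.inr v) ↔ H.Adj u v := by
  simp [linkCenters, SimpleGraph.fromRel_adj, SimpleGraph.adj_comm (G := H) u v]
  intro h; rintro rfl; exact (H.irrefl h).elim

@[simp] lemma link_adj_inl_inr {A B : Type} (G : SimpleGraph A) (H : SimpleGraph B) (a : A) (b : B)
    (u : A) (v : B) : (linkCenters G H a b).Adj (.inl u) (.inr v) ↔ u = a ∧ v = b := by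
  simp [linkCenters, SimpleGraph.fromRel_adj]

@[simp] lemma link_adj_inr_inl {A B : Type} (G : SimpleGraph A) (H : SimpleGraph B) (a : A) (b : B)
    (u : B) (v : A) : (linkCenters G H a b).Adj (.inr u) (.inl v) ↔ v = a ∧ u = b := by
  simp [linkCenters, SimpleGraph.fromRel_adj]

lemma triStar_adj (t : ℕ) (a b : TriStarVerts t) :
    (triStar t).Adj a b ↔
      (linkCenters (linkCenters (typeStar t 1) (typeStar t 2) none none) (typeStar t 3)
        (Sum.inr none) none).Adj a b ∨
      (a = .inl (.inl none) ∧ b = .inr none) ∨ (b = .inl (.inl none) ∧ a = .inr none) := by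
  simp only [triStar, SimpleGraph.sup_adj, SimpleGraph.fromEdgeSet_adj,
    Set.mem_singleton_iff, Sym2.eq_iff]
  constructor
  · rintro (h | ⟨(⟨rfl, rfl⟩ | ⟨rfl, rfl⟩), hne⟩)
    · exact Or.inl h
    · exact Or.inr (Or.inl ⟨rfl, rfl⟩)
    · exact Or.inr (Or.inr ⟨rfl, rfl⟩)
  · rintro (h | ⟨rfl, rfl⟩ | ⟨rfl, rfl⟩)
    · exact Or.inl h
    · exact Or.inr ⟨Or.inl ⟨rfl, rfl⟩, Sum.inl_ne_inr⟩
    · exact Or.inr ⟨Or.inr ⟨rfl, rfl⟩, Sum.inr_ne_inl⟩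

/-! ### The three retractions -/

def psi1 (t : ℕ) : TriStarVerts t →
    Option (Fin (t ^ 1) × Fin (t ^ (3 - 1))) ⊕
      Option (Fin (t ^ (1 + 1 % 3)) × Fin (t ^ (3 - (1 + 1 % 3))))
  | .inl y => y
  | .inr none => .inl none
  | .inr (some _) => .inr none

def psi2 (t : ℕ) : TriStarVerts t →
    Option (Fin (t ^ 2) × Fin (t ^ (3 - 2))) ⊕
      Option (Fin (t ^ (1 + 2 % 3)) × Fin (t ^ (3 - (1 + 2 % 3))))
  | .inl (.inl none) => .inl none
  | .inl (.inl (some (_, r))) => if (r : ℕ) % 2 = 0 then .inr none else .inl none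
  | .inl (.inr s) => .inl s
  | .inr s => .inr s

def psi3 (t : ℕ) : TriStarVerts t →
    Option (Fin (t ^ 3) × Fin (t ^ (3 - 3))) ⊕
      Option (Fin (t ^ (1 + 3 % 3)) × Fin (t ^ (3 - (1 + 3 % 3))))
  | .inl (.inl s) => .inr s
  | .inl (.inr none) => .inl none
  | .inl (.inr (some (_, r))) => if (r : ℕ) % 2 = 0 then .inr none else .inl none
  | .inr s => .inl s

lemma retract1 (t : ℕ) : ∀ a b : TriStarVerts t, (triStar t).Adj a b →
    psi1 t a = psi1 t b ∨ (paperTree t 1).Adj (psi1 t a) (psi1 t b) := by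
  intro a b h
  rw [triStar_adj] at h
  show _ ∨ (linkCenters (typeStar t 1) (typeStar t 2) none none).Adj _ _
  rcases a with (x | (_ | ⟨j, r⟩)) <;> rcases b with (y | (_ | ⟨j', r'⟩)) <;>
    simp_all [psi1, typeStar, -pow_zero, -Nat.pow_zero]
  all_goals (rcases h with rfl | rfl <;> simp)

lemma retract2 (t : ℕ) : ∀ a b : TriStarVerts t, (triStar t).Adj a b →
    psi2 t a = psi2 t b ∨ (paperTree t 2).Adj (psi2 t a) (psi2 t b) := by
  intro a b h
  rw [triStar_adj] at h
  show _ ∨ (linkCenters (typeStar t 2) (typeStar t 3) none none).Adj _ _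
  rcases a with ((_ | ⟨j, r⟩) | x) | y <;> rcases b with ((_ | ⟨j', r'⟩) | x') | y' <;>
    simp_all [psi2, typeStar, -pow_zero, -Nat.pow_zero] <;>
    rcases Nat.even_or_odd (r : ℕ) with hr | hr <;>
    rcases Nat.even_or_odd ((r' : ℕ)) with hr' | hr' <;>
    simp_all [Nat.even_iff, Nat.odd_iff] <;> omega

lemma retract3 (t : ℕ) : ∀ a b : TriStarVerts t, (triStar t).Adj a b →
    psi3 t a = psi3 t b ∨ (paperTree t 3).Adj (psi3 t a) (psi3 t b) := by
  intro a b h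
  rw [triStar_adj] at h
  show _ ∨ (linkCenters (typeStar t 3) (typeStar t 1) none none).Adj _ _
  rcases a with ((x | (_ | ⟨j, r⟩))) | y <;> rcases b with ((x' | (_ | ⟨j', r'⟩))) | y' <;>
    simp_all [psi3, typeStar, -pow_zero, -Nat.pow_zero] <;>
    rcases Nat.even_or_odd (r : ℕ) with hr | hr <;>
    rcases Nat.even_or_odd ((r' : ℕ)) with hr' | hr' <;>
    simp_all [Nat.even_iff, Nat.odd_iff] <;> omega

/-- For `t ≥ 3`, the graph made of one star of each type together with
a triangle on their three centers is an isometric-universal graph for `{T₁, T₂, T₃}`,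
and it has exactly `3(t³ + 1)` vertices. -/
theorem stmt_8 (t : ℕ) (ht : 3 ≤ t) :
    IsIsoUniversalTriple (paperTree t 1) (paperTree t 2) (paperTree t 3) (triStar t) ∧
    Nat.card (TriStarVerts t) = 3 * (t ^ 3 + 1) := by
  constructor
  · refine ⟨⟨Sum.inl, ?_⟩, ⟨fun x => match x with | .inl s => .inl (.inr s) | .inr s => .inr s, ?_⟩,
      ⟨fun x => match x with | .inl s => .inr s | .inr s => .inl (.inl s), ?_⟩⟩
    · refine isometric_of_retract _ (psi1 t) ?_ (fun v => rfl) (retract1 t)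
      intro u v h
      rw [triStar_adj]
      exact Or.inl ((link_adj_inl_inl _ _ _ _ u v).mpr h)
    · refine isometric_of_retract _ (psi2 t) ?_ ?_ (retract2 t)
      · intro u v h
        rw [triStar_adj]
        have h' : (linkCenters (typeStar t 2) (typeStar t 3) none none).Adj u v := h
        rcases u with u | u <;> rcases v with v | v <;> simp_all [-pow_zero, -Nat.pow_zero]
      · rintro (v | v) <;> rcases v with _ | ⟨j, r⟩ <;> rfl
    · refine isometric_of_retract _ (psi3 t) ?_ ?_ (retract3 t)
      · intro u v h
        rw [triStar_adj]
        have h' : (linkCenters (typeStar t 3) (typeStar t 1) none none).Adj u v := h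
        rcases u with u | u <;> rcases v with v | v <;> simp_all [-pow_zero, -Nat.pow_zero]
      · rintro (v | v) <;> rfl
  · simp only [Nat.card_eq_fintype_card, Fintype.card_sum, Fintype.card_option,
      Fintype.card_prod, Fintype.card_fin]
    ring_nf
end

section
/- Let t ≥ 3 be an integer, let T be a tree, and let S and S' be subgraphs of T that are isometric subgraphs of T and are isomorphic to a type-p star and a type-p' star respectively, with p ≤ p' in {1,2,3} and with centers c and c'. If c ≠ c', then |V(S) ∩ V(S')| ≤ 1 + 2·t^{3−p'}. If p ≠ p' (regardless of whether c = c'), then |V(S) ∩ V(S')| ≤ 1 + t^{p+3−p'}. -/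
open SimpleGraph

namespace SubdividedStar
variable {b ℓ : ℕ}

lemma adj_none_some {j : Fin b} {r : Fin ℓ} :
    (SubdividedStar b ℓ).Adj none (some (j, r)) ↔ (r : ℕ) = 0 := by
  rw [SubdividedStar, fromRel_adj]; simp

lemma adj_some_some {j j' : Fin b} {r r' : Fin ℓ} :
    (SubdividedStar b ℓ).Adj (some (j, r)) (some (j', r')) ↔
      j = j' ∧ ((r' : ℕ) = (r : ℕ) + 1 ∨ (r : ℕ) = (r' : ℕ) + 1) := by
  rw [SubdividedStar, fromRel_adj]
  constructor
  · rintro ⟨hne, (⟨h1,h2⟩|⟨h1,h2⟩)⟩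
    · exact ⟨h1, Or.inl h2⟩
    · exact ⟨h1.symm, Or.inr h2⟩
  · rintro ⟨rfl, (h|h)⟩
    · exact ⟨by simp [Fin.ext_iff]; omega, Or.inl ⟨rfl, h⟩⟩
    · exact ⟨by simp [Fin.ext_iff]; omega, Or.inr ⟨rfl, h⟩⟩

lemma adj_some_none {j : Fin b} {r : Fin ℓ} :
    (SubdividedStar b ℓ).Adj (some (j, r)) none ↔ (r : ℕ) = 0 := by
  rw [adj_comm]; exact adj_none_some

/-- Walk from a branch vertex to the center. -/
def toCenter (j : Fin b) : (r : ℕ) → (h : r < ℓ) → (SubdividedStar b ℓ).Walk (some (j, ⟨r, h⟩)) none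
  | 0, h => Walk.cons (adj_some_none.mpr rfl) Walk.nil
  | (r+1), h => Walk.cons
      (adj_some_some.mpr ⟨rfl, Or.inr rfl⟩ :
        (SubdividedStar b ℓ).Adj (some (j, ⟨r+1, h⟩)) (some (j, ⟨r, Nat.lt_of_succ_lt h⟩)))
      (toCenter j r (Nat.lt_of_succ_lt h))

@[simp] lemma toCenter_length (j : Fin b) (r : ℕ) (h : r < ℓ) :
    (toCenter j r h).length = r + 1 := by
  induction r with
  | zero => rfl
  | succ n ih => simp [toCenter, ih]

/-- Walk from a branch vertex down to depth 0 of the same branch. -/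
def toZero (j : Fin b) (h0 : 0 < ℓ) : (r : ℕ) → (h : r < ℓ) →
    (SubdividedStar b ℓ).Walk (some (j, ⟨r, h⟩)) (some (j, ⟨0, h0⟩))
  | 0, h => Walk.nil
  | (r+1), h => Walk.cons
      (adj_some_some.mpr ⟨rfl, Or.inr rfl⟩ :
        (SubdividedStar b ℓ).Adj (some (j, ⟨r+1, h⟩)) (some (j, ⟨r, Nat.lt_of_succ_lt h⟩)))
      (toZero j h0 r (Nat.lt_of_succ_lt h))

@[simp] lemma toZero_length (j : Fin b) (h0 : 0 < ℓ) (r : ℕ) (h : r < ℓ) :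
    (toZero j h0 r h).length = r := by
  induction r with
  | zero => rfl
  | succ n ih => simp [toZero, ih]

/-- A potential function used for distance lower bounds. -/
def pot (w : Fin b → ℤ) : Option (Fin b × Fin ℓ) → ℤ
  | none => 0
  | some (j, r) => w j * ((r : ℕ) + 1)

lemma pot_adj {w : Fin b → ℤ} (hw : ∀ k, |w k| ≤ 1) {x y : Option (Fin b × Fin ℓ)}
    (hxy : (SubdividedStar b ℓ).Adj x y) : |pot w x - pot w y| ≤ 1 := by
  rcases x with _ | ⟨j, r⟩ <;> rcases y with _ | ⟨j', r'⟩
  · simp at hxy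
  · have h0 := adj_none_some.mp hxy
    simp only [pot, h0]
    simpa using hw j'
  · have h0 := adj_some_none.mp hxy
    simp only [pot, h0]
    simpa using hw j
  · obtain ⟨rfl, h | h⟩ := adj_some_some.mp hxy <;> simp only [pot] <;>
      · rw [← mul_sub, abs_mul]
        calc |w j| * |((r:ℕ):ℤ) + 1 - (((r':ℕ):ℤ) + 1)| ≤ 1 * 1 := by
              apply mul_le_mul (hw j) (by rw [abs_le]; constructor <;> push_cast <;> omega)
                (abs_nonneg _) zero_le_one
          _ = 1 := by ring

lemma pot_walk {w : Fin b → ℤ} (hw : ∀ k, |w k| ≤ 1) {x y : Option (Fin b × Fin ℓ)}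
    (p : (SubdividedStar b ℓ).Walk x y) : |pot w x - pot w y| ≤ (p.length : ℤ) := by
  induction p with
  | nil => simp
  | cons h q ih =>
    calc |pot w _ - pot w _| ≤ |pot w _ - pot w _| + |pot w _ - pot w _| := abs_sub_le _ _ _
      _ ≤ 1 + q.length := add_le_add (pot_adj hw h) ih
      _ = _ := by simp [Walk.length_cons]; ring

lemma pot_dist {w : Fin b → ℤ} (hw : ∀ k, |w k| ≤ 1) {x y : Option (Fin b × Fin ℓ)}
    (hr : (SubdividedStar b ℓ).Reachable x y) :
    |pot w x - pot w y| ≤ ((SubdividedStar b ℓ).dist x y : ℤ) := by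
  obtain ⟨q, hq⟩ := hr.exists_walk_length_eq_dist
  rw [← hq]; exact pot_walk hw q

end SubdividedStar

namespace SubdividedStar
variable {b ℓ : ℕ}

lemma dist_some_none (j : Fin b) (r : Fin ℓ) :
    (SubdividedStar b ℓ).dist (some (j, r)) none = (r : ℕ) + 1 := by
  set w : Fin b → ℤ := fun k => if k = j then (1:ℤ) else 0 with hwdef
  have hw : ∀ k, |w k| ≤ 1 := by
    intro k; simp only [hwdef]; split <;> simp
  have hup : (SubdividedStar b ℓ).dist (some (j, r)) none ≤ (r : ℕ) + 1 := by
    have := dist_le (toCenter j r r.isLt)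
    simpa using this
  have hlow := pot_dist hw
    (⟨toCenter j r r.isLt⟩ : (SubdividedStar b ℓ).Reachable (some (j,r)) none)
  have h1 : pot w (some (j, r)) = (r : ℕ) + 1 := by simp [pot, hwdef]
  have h2 : pot w (none : Option (Fin b × Fin ℓ)) = 0 := rfl
  rw [h1, h2, sub_zero, abs_of_nonneg (by positivity)] at hlow
  omega

lemma dist_some_some_ne {j j' : Fin b} (r r' : Fin ℓ) (hjj : j ≠ j') :
    (SubdividedStar b ℓ).dist (some (j, r)) (some (j', r')) = (r : ℕ) + (r' : ℕ) + 2 := by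
  set w : Fin b → ℤ := fun k => if k = j then (1:ℤ) else if k = j' then -1 else 0 with hwdef
  have hw : ∀ k, |w k| ≤ 1 := by
    intro k; simp only [hwdef]; split
    · simp
    · split <;> simp
  have hup : (SubdividedStar b ℓ).dist (some (j, r)) (some (j', r')) ≤ (r:ℕ) + (r':ℕ) + 2 := by
    have := dist_le ((toCenter j r r.isLt).append (toCenter j' r' r'.isLt).reverse)
    simp only [Walk.length_append, Walk.length_reverse, toCenter_length] at this
    simp only [Fin.eta] at this
    omega
  have hlow := pot_dist hw
    (⟨(toCenter j r r.isLt).append (toCenter j' r' r'.isLt).reverse⟩ :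
      (SubdividedStar b ℓ).Reachable (some (j,r)) (some (j',r')))
  have h1 : pot w (some (j, r)) = (r : ℕ) + 1 := by simp [pot, hwdef]
  have h2 : pot w (some (j', r')) = -((r' : ℕ) + 1) := by simp [pot, hwdef, Ne.symm hjj]
  rw [h1, h2, sub_neg_eq_add, abs_of_nonneg (by positivity)] at hlow
  push_cast at hlow
  omega

lemma dist_some_zero (j : Fin b) (r : Fin ℓ) (h0 : 0 < ℓ) :
    (SubdividedStar b ℓ).dist (some (j, r)) (some (j, ⟨0, h0⟩)) = (r : ℕ) := by
  set w : Fin b → ℤ := fun k => if k = j then (1:ℤ) else 0 with hwdef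
  have hw : ∀ k, |w k| ≤ 1 := by
    intro k; simp only [hwdef]; split <;> simp
  have hup : (SubdividedStar b ℓ).dist (some (j, r)) (some (j, ⟨0,h0⟩)) ≤ (r:ℕ) := by
    have := dist_le (toZero j h0 r r.isLt)
    simpa using this
  have hlow := pot_dist hw
    (⟨toZero j h0 r r.isLt⟩ : (SubdividedStar b ℓ).Reachable (some (j,r)) (some (j,⟨0,h0⟩)))
  have h1 : pot w (some (j, r)) = (r : ℕ) + 1 := by simp [pot, hwdef]
  have h2 : pot w (some (j, (⟨0,h0⟩ : Fin ℓ))) = 1 := by simp [pot, hwdef]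
  rw [h1, h2] at hlow
  have h3 : |((r:ℕ):ℤ) + 1 - 1| = (r:ℕ) := by simp
  rw [h3] at hlow
  omega

end SubdividedStar

namespace SubdividedStar
variable {b ℓ : ℕ}

lemma ncard_nbhd_none (h0 : 0 < ℓ) :
    ((SubdividedStar b ℓ).neighborSet none).ncard ≤ b := by
  have hsub : (SubdividedStar b ℓ).neighborSet none ⊆
      Set.range (fun j : Fin b => some (j, (⟨0,h0⟩ : Fin ℓ))) := by
    rintro (_ | ⟨j, r⟩) hx
    · exact absurd hx (by simp [neighborSet])
    · have hr := adj_none_some.mp hx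
      exact ⟨j, by simp [Fin.ext_iff, hr.symm]⟩
  calc _ ≤ _ := Set.ncard_le_ncard hsub (Set.toFinite _)
    _ ≤ b := by
      rw [← Set.image_univ]
      calc _ ≤ (Set.univ : Set (Fin b)).ncard := Set.ncard_image_le (Set.toFinite _)
        _ = b := by rw [Set.ncard_univ]; simp

lemma ncard_nbhd_some (j0 : Fin b) (r0 : Fin ℓ) :
    ((SubdividedStar b ℓ).neighborSet (some (j0, r0))).ncard ≤ 2 := by
  classical
  by_cases h : (r0 : ℕ) = 0
  · -- neighbors ⊆ {none, succ}
    set v1 : Option (Fin b × Fin ℓ) :=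
      if hs : (r0 : ℕ) + 1 < ℓ then some (j0, ⟨(r0:ℕ)+1, hs⟩) else none with hv1
    have hsub : (SubdividedStar b ℓ).neighborSet (some (j0,r0)) ⊆ {none, v1} := by
      rintro (_ | ⟨j, r⟩) hx
      · exact Set.mem_insert _ _
      · obtain ⟨rfl, hcase | hcase⟩ := adj_some_some.mp hx
        · right
          rw [hv1, dif_pos (show (r0:ℕ)+1 < ℓ by have := r.isLt; omega)]
          simp [Fin.ext_iff, hcase]
        · have := r.isLt; omega
    calc _ ≤ _ := Set.ncard_le_ncard hsub (Set.toFinite _)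
      _ ≤ ({v1} : Set (Option (Fin b × Fin ℓ))).ncard + 1 := Set.ncard_insert_le _ _
      _ ≤ 2 := by rw [Set.ncard_singleton]
  · set v1 : Option (Fin b × Fin ℓ) :=
      if hs : (r0 : ℕ) + 1 < ℓ then some (j0, ⟨(r0:ℕ)+1, hs⟩) else none with hv1
    set v2 : Option (Fin b × Fin ℓ) :=
      if hs : (r0 : ℕ) - 1 < ℓ then some (j0, ⟨(r0:ℕ)-1, hs⟩) else none with hv2
    have hsub : (SubdividedStar b ℓ).neighborSet (some (j0,r0)) ⊆ {v2, v1} := by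
      rintro (_ | ⟨j, r⟩) hx
      · exact absurd (adj_some_none.mp hx) h
      · obtain ⟨rfl, hcase | hcase⟩ := adj_some_some.mp hx
        · right
          rw [hv1, dif_pos (show (r0:ℕ)+1 < ℓ by have := r.isLt; omega)]
          simp [Fin.ext_iff, hcase]
        · left
          rw [hv2, dif_pos (show (r0:ℕ) - 1 < ℓ by have := r0.isLt; omega)]
          simp only [Option.some.injEq, Prod.mk.injEq, Fin.ext_iff]
          exact ⟨trivial, by omega⟩
    calc _ ≤ _ := Set.ncard_le_ncard hsub (Set.toFinite _)
      _ ≤ ({v1} : Set (Option (Fin b × Fin ℓ))).ncard + 1 := Set.ncard_insert_le _ _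
      _ ≤ 2 := by rw [Set.ncard_singleton]

end SubdividedStar



namespace SubdividedStar
variable {b ℓ : ℕ}

lemma ncard_nbhd_le (x : Option (Fin b × Fin ℓ)) (h0 : 0 < ℓ) (hb : 2 ≤ b) :
    ((SubdividedStar b ℓ).neighborSet x).ncard ≤ b := by
  cases x with
  | none => exact ncard_nbhd_none h0
  | some pr => exact le_trans (ncard_nbhd_some pr.1 pr.2) hb

lemma ncard_nbhd_of_ne_none (x : Option (Fin b × Fin ℓ)) (hx : x ≠ none) :
    ((SubdividedStar b ℓ).neighborSet x).ncard ≤ 2 := by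
  cases x with
  | none => exact absurd rfl hx
  | some pr => exact ncard_nbhd_some pr.1 pr.2

end SubdividedStar

namespace StarAux
variable {b ℓ : ℕ}
-- counting lemma
lemma star_count (P : Set (Option (Fin b × Fin ℓ))) (B : Set (Fin b))
    (hP : ∀ j r, some (j,r) ∈ P → j ∈ B) {n : ℕ} (hB : B.ncard ≤ n) :
    P.ncard ≤ 1 + n * ℓ := by
  have hsub : P ⊆ insert none ((fun x : Fin b × Fin ℓ => some x) '' (B ×ˢ Set.univ)) := by
    rintro (_ | ⟨j, r⟩) h
    · exact Set.mem_insert _ _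
    · exact Set.mem_insert_of_mem _ ⟨(j,r), ⟨hP j r h, trivial⟩, rfl⟩
  calc P.ncard ≤ _ := Set.ncard_le_ncard hsub (Set.toFinite _)
    _ ≤ ((fun x : Fin b × Fin ℓ => some x) '' (B ×ˢ Set.univ)).ncard + 1 :=
        Set.ncard_insert_le _ _
    _ ≤ (B ×ˢ (Set.univ : Set (Fin ℓ))).ncard + 1 := by
        gcongr; exact Set.ncard_image_le (Set.toFinite _)
    _ ≤ n * ℓ + 1 := by
        gcongr
        rw [← Nat.card_coe_set_eq]
        calc Nat.card ↥(B ×ˢ (Set.univ : Set (Fin ℓ)))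
            = Nat.card (↥B × ↥(Set.univ : Set (Fin ℓ))) := Nat.card_congr (Equiv.Set.prod _ _)
          _ = Nat.card ↥B * Nat.card ↥(Set.univ : Set (Fin ℓ)) := Nat.card_prod _ _
          _ ≤ n * ℓ := by
              rw [Nat.card_coe_set_eq, Nat.card_coe_set_eq, Set.ncard_univ]
              exact Nat.mul_le_mul hB (by simp)
    _ = 1 + n * ℓ := by omega

end StarAux

lemma iso_dist_le {V W : Type*} {G : SimpleGraph V} {H : SimpleGraph W} (ψ : G ≃g H) (u v : V) :
    H.dist (ψ u) (ψ v) ≤ G.dist u v := by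
  by_cases hr : G.Reachable u v
  · obtain ⟨p, hp⟩ := hr.exists_walk_length_eq_dist
    calc H.dist _ _ ≤ (p.map ψ.toHom).length := dist_le _
      _ = p.length := Walk.length_map _ _
      _ = _ := hp
  · have h2 : ¬ H.Reachable (ψ u) (ψ v) := by
      intro h
      exact hr (by simpa using h.map ψ.symm.toHom)
    simp [dist_eq_zero_of_not_reachable h2]

lemma iso_dist {V W : Type*} {G : SimpleGraph V} {H : SimpleGraph W} (ψ : G ≃g H) (u v : V) :
    H.dist (ψ u) (ψ v) = G.dist u v := by
  refine le_antisymm (iso_dist_le ψ u v) ?_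
  have := iso_dist_le ψ.symm (ψ u) (ψ v)
  simpa using this

lemma tree_convex {V : Type} [Finite V] {T : SimpleGraph V} (hT : T.IsTree) (S : T.Subgraph)
    (hS : ∀ u v : S.verts, S.coe.edist u v = T.edist u.val v.val)
    {u v y : V} (hu : u ∈ S.verts) (hv : v ∈ S.verts)
    (hy : T.dist u y + T.dist y v = T.dist u v) : y ∈ S.verts := by
  have hconn := hT.isConnected
  obtain ⟨p1, hp1l⟩ := (hconn.preconnected u y).exists_walk_length_eq_dist
  obtain ⟨p2, hp2l⟩ := (hconn.preconnected y v).exists_walk_length_eq_dist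
  have hQ : (p1.append p2).length = T.dist u v := by
    rw [Walk.length_append, hp1l, hp2l, hy]
  have hQp : (p1.append p2).IsPath := (p1.append p2).isPath_of_length_eq_dist hQ
  have hreach : S.coe.Reachable ⟨u,hu⟩ ⟨v,hv⟩ := by
    rw [← edist_ne_top_iff_reachable, hS]
    exact edist_ne_top_iff_reachable.mpr (hconn.preconnected u v)
  obtain ⟨R, hRl⟩ := hreach.exists_walk_length_eq_dist
  have hRd : S.coe.dist ⟨u,hu⟩ ⟨v,hv⟩ = T.dist u v := by
    unfold SimpleGraph.dist
    rw [hS]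
  have hlen : (R.map S.hom).length = T.dist u v := by
    rw [Walk.length_map, hRl, hRd]
  have hRp : (R.map S.hom).IsPath := (R.map S.hom).isPath_of_length_eq_dist hlen
  have hQR : p1.append p2 = R.map S.hom :=
    ExistsUnique.unique (hT.existsUnique_path u v) hQp hRp
  have hy1 : y ∈ (p1.append p2).support :=
    (Walk.mem_support_append_iff _ _).mpr (Or.inl p1.end_mem_support)
  rw [hQR] at hy1
  have hy2 : y ∈ R.support.map S.hom := by rw [← Walk.support_map]; exact hy1
  obtain ⟨z, hz, rfl⟩ := List.mem_map.mp hy2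
  exact z.2

/-- Let `T` be a tree, `S` and `S'` isometric subgraphs of `T`
isomorphic to a type-`p` star and a type-`p'` star with `1 ≤ p ≤ p' ≤ 3` and with
centers `c` and `c'`. If `c ≠ c'` then `|V(S) ∩ V(S')| ≤ 1 + 2 t^(3-p')`, and if
`p ≠ p'` then `|V(S) ∩ V(S')| ≤ 1 + t^(p+3-p')`. -/
theorem stmt_10 (t : ℕ) (ht : 3 ≤ t) {V : Type} [Finite V]
    (T : SimpleGraph V) (hT : T.IsTree)
    (p p' : ℕ) (hp1 : 1 ≤ p) (hpp' : p ≤ p') (hp'3 : p' ≤ 3)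
    (S S' : T.Subgraph)
    (hSiso : ∀ u v : S.verts, S.coe.edist u v = T.edist u.val v.val)
    (hS'iso : ∀ u v : S'.verts, S'.coe.edist u v = T.edist u.val v.val)
    (e : S.coe ≃g typeStar t p) (e' : S'.coe ≃g typeStar t p') :
    ((e.symm none : S.verts).val ≠ (e'.symm none : S'.verts).val →
      Nat.card ↥(S.verts ∩ S'.verts) ≤ 1 + 2 * t ^ (3 - p')) ∧
    (p ≠ p' →
      Nat.card ↥(S.verts ∩ S'.verts) ≤ 1 + t ^ (p + 3 - p')) := by
  classical
  have htpos : 0 < t := by omega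
  have hℓpos : 0 < t ^ (3 - p') := pow_pos htpos _
  have hℓppos : 0 < t ^ (3 - p) := pow_pos htpos _
  set e2 : S.coe ≃g SubdividedStar (t ^ p) (t ^ (3 - p)) := e with he2
  set e2' : S'.coe ≃g SubdividedStar (t ^ p') (t ^ (3 - p')) := e' with he2'
  have DS : ∀ x y : S.verts,
      T.dist x.val y.val = (SubdividedStar (t ^ p) (t ^ (3 - p))).dist (e2 x) (e2 y) := by
    intro x y
    rw [iso_dist e2 x y]
    unfold SimpleGraph.dist
    rw [hSiso]
  have DS' : ∀ x y : S'.verts,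
      T.dist x.val y.val = (SubdividedStar (t ^ p') (t ^ (3 - p'))).dist (e2' x) (e2' y) := by
    intro x y
    rw [iso_dist e2' x y]
    unfold SimpleGraph.dist
    rw [hS'iso]
  set z0 : Fin (t ^ (3 - p')) := ⟨0, hℓpos⟩ with hz0
  set inU : Set (Option (Fin (t ^ p') × Fin (t ^ (3 - p')))) :=
    {a | ((e2'.symm a : S'.verts) : V) ∈ S.verts} with hinU
  -- counting transfer
  have hcard : Nat.card ↥(S.verts ∩ S'.verts) ≤ inU.ncard := by
    rw [← Nat.card_coe_set_eq]
    have hmemU : ∀ w : ↥(S.verts ∩ S'.verts), (e2' ⟨w.val, w.2.2⟩ : Option _) ∈ inU := by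
      intro w
      show ((e2'.symm (e2' ⟨w.val, w.2.2⟩) : S'.verts) : V) ∈ S.verts
      rw [RelIso.symm_apply_apply]
      exact w.2.1
    apply Nat.card_le_card_of_injective (fun w => (⟨_, hmemU w⟩ : ↥inU))
    intro w1 w2 h
    have h1 : (e2' ⟨w1.val, w1.2.2⟩ : Option _) = e2' ⟨w2.val, w2.2.2⟩ := congrArg Subtype.val h
    have h2 := e2'.toEquiv.injective h1
    have h3 := congrArg Subtype.val h2
    exact Subtype.ext h3
  -- convexity in star' coordinates
  have conv : ∀ a z y', a ∈ inU → z ∈ inU →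
      (SubdividedStar (t ^ p') (t ^ (3 - p'))).dist a y' +
        (SubdividedStar (t ^ p') (t ^ (3 - p'))).dist y' z =
        (SubdividedStar (t ^ p') (t ^ (3 - p'))).dist a z →
      y' ∈ inU := by
    intro a z y' ha hz hd
    refine tree_convex hT S hSiso ha hz ?_
    rw [DS' (e2'.symm a) (e2'.symm y'), DS' (e2'.symm y') (e2'.symm z),
      DS' (e2'.symm a) (e2'.symm z)]
    simpa using hd
  -- the key counting argument
  have key : ∀ n : ℕ, 1 ≤ n →
      (∀ h : (none : Option (Fin (t ^ p') × Fin (t ^ (3 - p')))) ∈ inU,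
        ((SubdividedStar (t ^ p) (t ^ (3 - p))).neighborSet
          (e2 ⟨((e2'.symm none : S'.verts) : V), h⟩)).ncard ≤ n) →
      Nat.card ↥(S.verts ∩ S'.verts) ≤ 1 + n * t ^ (3 - p') := by
    intro n hn hnbr
    by_cases hex : ∃ j r, some (j, r) ∈ inU
    · obtain ⟨j1, r1, h1⟩ := hex
      by_cases hex2 : ∃ j2 r2, some (j2, r2) ∈ inU ∧ j2 ≠ j1
      · obtain ⟨j2, r2, h2, hj21⟩ := hex2
        have hj12 : j1 ≠ j2 := Ne.symm hj21
        have hnone : none ∈ inU := by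
          apply conv (some (j1, r1)) (some (j2, r2)) none h1 h2
          rw [SubdividedStar.dist_some_none, SimpleGraph.dist_comm,
            SubdividedStar.dist_some_none, SubdividedStar.dist_some_some_ne r1 r2 hj12]
          omega
        have hdown : ∀ j r, some (j, r) ∈ inU → some (j, z0) ∈ inU := by
          intro j r hjr
          by_cases hj : j = j1
          · subst hj
            apply conv (some (j, r)) (some (j2, r2)) (some (j, z0)) hjr h2
            rw [SubdividedStar.dist_some_zero j r hℓpos,
              SubdividedStar.dist_some_some_ne z0 r2 hj12,
              SubdividedStar.dist_some_some_ne r r2 hj12]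
            rw [hz0]
            simp
            omega
          · apply conv (some (j, r)) (some (j1, r1)) (some (j, z0)) hjr h1
            rw [SubdividedStar.dist_some_zero j r hℓpos,
              SubdividedStar.dist_some_some_ne z0 r1 hj,
              SubdividedStar.dist_some_some_ne r r1 hj]
            rw [hz0]
            simp
            omega
        set B : Set (Fin (t ^ p')) := {j | some (j, z0) ∈ inU} with hB
        have hBn : B.ncard ≤ n := by
          have hnb := hnbr hnone
          have hmem : ∀ j : ↥B,
              (e2 ⟨((e2'.symm (some (j.val, z0)) : S'.verts) : V), j.2⟩ : Option _) ∈
                (SubdividedStar (t ^ p) (t ^ (3 - p))).neighborSet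
                  (e2 ⟨((e2'.symm none : S'.verts) : V), hnone⟩) := by
            intro j
            have hd : (SubdividedStar (t ^ p) (t ^ (3 - p))).dist
                (e2 ⟨((e2'.symm none : S'.verts) : V), hnone⟩)
                (e2 ⟨((e2'.symm (some (j.val, z0)) : S'.verts) : V), j.2⟩) = 1 := by
              rw [← DS]
              have hTd : T.dist ((e2'.symm none : S'.verts) : V)
                  ((e2'.symm (some (j.val, z0)) : S'.verts) : V) = 1 := by
                rw [DS' (e2'.symm none) (e2'.symm (some (j.val, z0)))]
                simp only [RelIso.apply_symm_apply]
                rw [SimpleGraph.dist_comm, SubdividedStar.dist_some_none, hz0]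
              exact hTd
            exact SimpleGraph.dist_eq_one_iff_adj.mp hd
          calc B.ncard = Nat.card ↥B := (Nat.card_coe_set_eq _).symm
            _ ≤ Nat.card ↥((SubdividedStar (t ^ p) (t ^ (3 - p))).neighborSet
                  (e2 ⟨((e2'.symm none : S'.verts) : V), hnone⟩)) := by
                apply Nat.card_le_card_of_injective (fun j => ⟨_, hmem j⟩)
                intro a1 a2 h
                have h1 := congrArg Subtype.val h
                have h2 := e2.toEquiv.injective h1
                have h3 := congrArg Subtype.val h2
                have h4 := e2'.toEquiv.symm.injective (Subtype.ext h3)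
                have h5 : a1.val = a2.val := by
                  simpa using h4
                exact Subtype.ext h5
            _ = _ := Nat.card_coe_set_eq _
            _ ≤ n := hnb
        exact le_trans hcard (StarAux.star_count inU B hdown hBn)
      · push_neg at hex2
        have hP : ∀ j r, some (j, r) ∈ inU → j ∈ ({j1} : Set (Fin (t ^ p'))) := by
          intro j r hjr
          exact hex2 j r hjr
        have hc := StarAux.star_count inU {j1} hP (n := n)
          (by simpa using hn)
        exact le_trans hcard hc
    · push_neg at hex
      have hP : ∀ j r, some (j, r) ∈ inU → j ∈ (∅ : Set (Fin (t ^ p'))) :=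
        fun j r hjr => absurd hjr (hex j r)
      have hc := StarAux.star_count inU ∅ hP (n := n) (by simp)
      exact le_trans hcard hc
  constructor
  · -- c ≠ c'
    intro hne
    apply key 2 (by norm_num)
    intro h
    apply SubdividedStar.ncard_nbhd_of_ne_none
    intro heq
    have hX : (⟨((e2'.symm none : S'.verts) : V), h⟩ : S.verts) = e2.symm none := by
      rw [← heq, RelIso.symm_apply_apply]
    exact hne ((congrArg Subtype.val hX).symm)
  · -- p ≠ p'
    intro hpne
    have htp3 : 3 ≤ t ^ p := by
      calc 3 ≤ t := ht
        _ = t ^ 1 := (pow_one t).symm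
        _ ≤ t ^ p := Nat.pow_le_pow_right htpos hp1
    have hres : Nat.card ↥(S.verts ∩ S'.verts) ≤ 1 + t ^ p * t ^ (3 - p') := by
      apply key (t ^ p) (by omega)
      intro h
      exact SubdividedStar.ncard_nbhd_le _ hℓppos (by omega)
    have hpow : t ^ p * t ^ (3 - p') = t ^ (p + 3 - p') := by
      rw [← pow_add]
      congr 1
      omega
    rw [hpow] at hres
    exact hres
end

section
/- For every integer n ≥ 8 there exists a pair of trees, each with at most n vertices, such that, with k = ⌊(n−8)/3⌋, every minimum k-isometric-universal graph for this pair is not a tree. -/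
open SimpleGraph

/-- `φ` realizes `G` as a `k`-isometric subgraph of `U`: it is injective, maps edges to
edges, and preserves every distance whose value in `U` is at most `k` (distances take
the value `⊤` between vertices in different connected components). -/
def IsKIsometricEmbedding (k : ℕ) {V W : Type} (G : SimpleGraph V) (U : SimpleGraph W)
    (φ : V → W) : Prop :=
  Function.Injective φ ∧
  (∀ u v : V, G.Adj u v → U.Adj (φ u) (φ v)) ∧
  ∀ u v : V, U.edist (φ u) (φ v) ≤ (k : ℕ∞) → G.edist u v = U.edist (φ u) (φ v)

/-- `U` is a `k`-isometric-universal graph for the pair `{G₁, G₂}`: both `G₁` and `G₂`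
are isomorphic to `k`-isometric subgraphs of `U`. -/
def IsKIsoUniversalPair (k : ℕ) {V₁ V₂ W : Type} (G₁ : SimpleGraph V₁)
    (G₂ : SimpleGraph V₂) (U : SimpleGraph W) : Prop :=
  (∃ φ : V₁ → W, IsKIsometricEmbedding k G₁ U φ) ∧
  (∃ φ : V₂ → W, IsKIsometricEmbedding k G₂ U φ)



section Potential

variable {V : Type} {G : SimpleGraph V}

lemma abs_sub_le_walk_length (f : V → ℤ)
    (hf : ∀ u v, G.Adj u v → |f u - f v| ≤ 1) :
    ∀ {u v : V} (p : G.Walk u v), |f u - f v| ≤ p.length := by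
  intro u v p
  induction p with
  | nil => simp
  | cons h p ih =>
    rename_i a b c
    calc |f a - f c| ≤ |f a - f b| + |f b - f c| := abs_sub_le _ _ _
    _ ≤ 1 + p.length := add_le_add (hf _ _ h) ih
    _ = (p.length + 1 : ℕ) := by push_cast; ring

lemma pot_le_edist (f : V → ℤ)
    (hf : ∀ u v, G.Adj u v → |f u - f v| ≤ 1) (u v : V) :
    ((|f u - f v|.toNat : ℕ∞)) ≤ G.edist u v := by
  by_cases h : G.edist u v = ⊤
  · simp [h]
  · obtain ⟨p, hp⟩ := G.exists_walk_of_edist_ne_top h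
    rw [← hp]
    have h2 := abs_sub_le_walk_length f hf p
    have h3 : |f u - f v|.toNat ≤ p.length := by omega
    exact_mod_cast Nat.cast_le.mpr h3

lemma adj_edist_le_one {u v : V} (h : G.Adj u v) : G.edist u v ≤ 1 := by
  simpa using G.edist_le (Walk.cons h Walk.nil)

lemma chain_edist_le (f : ℕ → V) (a b : ℕ) (hab : a ≤ b)
    (h : ∀ i, a ≤ i → i < b → G.Adj (f i) (f (i + 1))) :
    G.edist (f a) (f b) ≤ (b - a : ℕ) := by
  induction b with
  | zero =>
    obtain rfl : a = 0 := by omega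
    simp
  | succ b ih =>
    rcases Nat.eq_or_lt_of_le hab with rfl | hlt
    · simp
    · have h1 : a ≤ b := by omega
      calc G.edist (f a) (f (b+1)) ≤ G.edist (f a) (f b) + G.edist (f b) (f (b+1)) :=
            SimpleGraph.edist_triangle
      _ ≤ (b - a : ℕ) + 1 := add_le_add (ih h1 (fun i h1 h2 => h i h1 (by omega)))
            (adj_edist_le_one (h b h1 (by omega)))
      _ = ((b + 1 - a : ℕ) : ℕ∞) := by
            rw [← Nat.cast_one, ← Nat.cast_add]; congr 1; omega

lemma hom_edist_le {W : Type} {H : SimpleGraph W} (f : V → W)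
    (hf : ∀ u v, G.Adj u v → H.Adj (f u) (f v)) (u v : V) :
    H.edist (f u) (f v) ≤ G.edist u v := by
  by_cases h : G.edist u v = ⊤
  · simp [h]
  · obtain ⟨p, hp⟩ := G.exists_walk_of_edist_ne_top h
    rw [← hp]
    have := H.edist_le (p.map (⟨f, fun {a b} hab => hf a b hab⟩ : G →g H))
    simpa using this

end Potential

set_option linter.unusedSectionVars false

section Cdist

variable {L : ℕ} [NeZero L]

/-- cyclic distance on `ZMod L` -/
def cdist (x y : ZMod L) : ℕ := min (x - y).val (y - x).val

lemma cdist_comm (x y : ZMod L) : cdist x y = cdist y x := min_comm _ _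

lemma cdist_le_natAbs (x y : ZMod L) (c : ℤ) (hc : (c : ZMod L) = x - y) :
    cdist x y ≤ c.natAbs := by
  rcases le_or_gt 0 c with h | h
  · have h1 : ((c.natAbs : ℕ) : ZMod L) = x - y := by
      rw [← hc, (Int.cast_natCast _).symm, Int.natAbs_of_nonneg h]
    have : (x - y).val = c.natAbs % L := by rw [← h1, ZMod.val_natCast]
    calc cdist x y ≤ (x - y).val := min_le_left _ _
    _ ≤ c.natAbs := by rw [this]; exact Nat.mod_le _ _
  · have h1 : ((c.natAbs : ℕ) : ZMod L) = y - x := by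
      have h0 : (c.natAbs : ℤ) = -c := by omega
      rw [(Int.cast_natCast _).symm, h0, Int.cast_neg, hc]; ring
    have : (y - x).val = c.natAbs % L := by rw [← h1, ZMod.val_natCast]
    calc cdist x y ≤ (y - x).val := min_le_right _ _
    _ ≤ c.natAbs := by rw [this]; exact Nat.mod_le _ _

lemma exists_rep (x y : ZMod L) : ∃ c : ℤ, (c : ZMod L) = x - y ∧ c.natAbs = cdist x y := by
  have key : ∀ z : ZMod L, ((z.val : ℤ) : ZMod L) = z := by
    intro z; rw [Int.cast_natCast, ZMod.natCast_val, ZMod.cast_id]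
  rcases min_cases (x - y).val (y - x).val with ⟨h1, _⟩ | ⟨h1, _⟩
  · refine ⟨(((x - y).val : ℕ) : ℤ), key _, ?_⟩
    unfold cdist; rw [h1, Int.natAbs_natCast]
  · refine ⟨-(((y - x).val : ℕ) : ℤ), ?_, ?_⟩
    · rw [Int.cast_neg, key]; ring
    · unfold cdist; rw [h1, Int.natAbs_neg, Int.natAbs_natCast]

lemma cdist_triangle (x y z : ZMod L) : cdist x z ≤ cdist x y + cdist y z := by
  obtain ⟨a, ha, ha'⟩ := exists_rep x y
  obtain ⟨b, hb, hb'⟩ := exists_rep y z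
  have : ((a + b : ℤ) : ZMod L) = x - z := by push_cast [ha, hb]; ring
  calc cdist x z ≤ (a + b).natAbs := cdist_le_natAbs x z _ this
  _ ≤ a.natAbs + b.natAbs := Int.natAbs_add_le _ _
  _ = _ := by rw [ha', hb']

lemma cdist_self (x : ZMod L) : cdist x x = 0 := by simp [cdist]

lemma cdist_add_one (x : ZMod L) : cdist x (x + 1) ≤ 1 := by
  have := cdist_le_natAbs x (x + 1) (-1) (by push_cast; ring)
  simpa using this

lemma cdist_eval (a b : ℕ) (hab : a ≤ b) (hb : b < L) :
    cdist (a : ZMod L) (b : ZMod L) = min (b - a) (L - (b - a)) := by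
  rcases Nat.eq_or_lt_of_le hab with rfl | hlt
  · simp [cdist_self]
  · have h1 : ((b : ZMod L) - a) = ((b - a : ℕ) : ZMod L) := by
      push_cast [Nat.cast_sub hab]; ring
    have h2 : ((a : ZMod L) - b) = ((L - (b - a) : ℕ) : ZMod L) := by
      have : ((L : ℕ) : ZMod L) = 0 := ZMod.natCast_self L
      push_cast [Nat.cast_sub (by omega : b - a ≤ L), Nat.cast_sub hab, this]
      ring
    rw [cdist, h1, h2, ZMod.val_natCast, ZMod.val_natCast,
      Nat.mod_eq_of_lt (by omega), Nat.mod_eq_of_lt (by omega)]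
    omega

end Cdist


lemma isAcyclic_of_height {V : Type} (G : SimpleGraph V) (h : V → ℕ)
    (hadj : ∀ u v, G.Adj u v → h u ≠ h v)
    (huniq : ∀ u v w, G.Adj u v → G.Adj u w → h v < h u → h w < h u → v = w) :
    G.IsAcyclic := by
  classical
  intro v c hc
  have hne : c.support.toFinset.Nonempty := ⟨v, by simp [Walk.start_mem_support]⟩
  obtain ⟨m, hm, hmax⟩ := Finset.exists_max_image c.support.toFinset h hne
  rw [List.mem_toFinset] at hm
  have hmax' : ∀ x ∈ c.support, h x ≤ h m := fun x hx => hmax x (List.mem_toFinset.mpr hx)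
  obtain ⟨c', hcyc, hsupp⟩ : ∃ c' : G.Walk m m, c'.IsCycle ∧ ∀ x ∈ c'.support, x ∈ c.support := by
    refine ⟨c.rotate m hm, hc.rotate hm, ?_⟩
    intro x hx
    have hperm := c.support_rotate m hm
    rw [Walk.support_eq_cons] at hx
    rcases List.mem_cons.mp hx with rfl | hx
    · exact hm
    · exact List.mem_of_mem_tail (hperm.mem_iff.mp hx)
  clear hc hm hmax hne
  cases c' with
  | nil => exact Walk.IsCycle.not_of_nil hcyc
  | cons hmx q =>
    rename_i x
    have h3 : 3 ≤ q.length + 1 := by simpa using hcyc.three_le_length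
    cases hq : q.reverse with
    | nil =>
      have hlen : q.length = 0 := by simpa using congrArg Walk.length hq
      omega
    | cons hmy q₂ =>
      rename_i y
      have hmemx : x ∈ (Walk.cons hmx q).support := by
        simp [Walk.support_cons]
      have hmemy : y ∈ (Walk.cons hmx q).support := by
        have : y ∈ q.reverse.support := by
          rw [hq]
          simp [Walk.support_cons]
        rw [Walk.support_reverse, List.mem_reverse] at this
        simp [Walk.support_cons, this]
      have hx1 : h x < h m :=
        lt_of_le_of_ne (hmax' x (hsupp x hmemx)) (fun e => hadj m x hmx e.symm)
      have hy1 : h y < h m :=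
        lt_of_le_of_ne (hmax' y (hsupp y hmemy)) (fun e => hadj m y hmy e.symm)
      have hxy : x = y := huniq m x y hmx hmy hx1 hy1
      subst hxy
      have hedge : s(m, x) ∈ q.edges := by
        have : s(m, x) ∈ q.reverse.edges := by
          rw [hq]; simp
        rwa [Walk.edges_reverse, List.mem_reverse] at this
      rw [Walk.cons_isCycle_iff] at hcyc
      exact hcyc.2 hedge


abbrev SpiderV (ℓ : Fin 3 → ℕ) : Type := Option (Σ l : Fin 3, Fin (ℓ l))

namespace Spider

variable {ℓ : Fin 3 → ℕ}

def dep : SpiderV ℓ → ℕ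
  | none => 0
  | some a => a.2.val + 1

def legOf : SpiderV ℓ → Option (Fin 3)
  | none => none
  | some a => some a.1

lemma dep_eq_zero_iff {u : SpiderV ℓ} : dep u = 0 ↔ u = none := by
  cases u <;> simp [dep]

def spider (ℓ : Fin 3 → ℕ) : SimpleGraph (SpiderV ℓ) where
  Adj u v := (legOf u = legOf v ∨ u = none ∨ v = none) ∧
    (dep u = dep v + 1 ∨ dep v = dep u + 1)
  symm := by
    constructor
    intro u v h
    exact ⟨by tauto, by tauto⟩
  loopless := by
    constructor
    intro u h
    omega

lemma spider_adj {u v : SpiderV ℓ} :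
    (spider ℓ).Adj u v ↔ (legOf u = legOf v ∨ u = none ∨ v = none) ∧
      (dep u = dep v + 1 ∨ dep v = dep u + 1) := Iff.rfl

lemma eq_of_legOf_dep {u v : SpiderV ℓ} (h1 : legOf u = legOf v) (h2 : dep u = dep v) :
    u = v := by
  match u, v with
  | none, none => rfl
  | none, some b => simp [dep] at h2
  | some a, none => simp [dep] at h2
  | some a, some b =>
    obtain ⟨l, i⟩ := a; obtain ⟨l', j⟩ := b
    simp only [legOf, Option.some_inj] at h1
    simp only [dep, add_left_inj] at h2
    subst h1
    rw [Fin.ext h2]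

/-- the chain map used for upper bounds -/
def chainMap (ℓ : Fin 3 → ℕ) (l : Fin 3) (t : ℕ) : SpiderV ℓ :=
  if h : t - 1 < ℓ l ∧ t ≠ 0 then some ⟨l, ⟨t - 1, h.1⟩⟩ else none

lemma chainMap_zero : chainMap ℓ l 0 = none := by simp [chainMap]

lemma chainMap_adj {l : Fin 3} {i : ℕ} (hi : i + 1 ≤ ℓ l) :
    (spider ℓ).Adj (chainMap ℓ l i) (chainMap ℓ l (i + 1)) := by
  rcases Nat.eq_zero_or_pos i with rfl | hpos
  · rw [chainMap_zero]
    rw [chainMap]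
    rw [dif_pos ⟨by omega, by omega⟩]
    exact ⟨by simp [legOf], by simp [dep]⟩
  · rw [chainMap, chainMap, dif_pos ⟨by omega, by omega⟩, dif_pos ⟨by omega, by omega⟩]
    refine ⟨Or.inl rfl, ?_⟩
    simp only [dep]
    omega

lemma chainMap_of_mem {u : SpiderV ℓ} {l : Fin 3} (h : legOf u = some l) :
    chainMap ℓ l (dep u) = u := by
  match u with
  | none => simp [legOf] at h
  | some a =>
    obtain ⟨l', j⟩ := a
    simp only [legOf, Option.some_inj] at h
    subst h
    have hj := j.isLt
    rw [chainMap, dif_pos ⟨by simp [dep], by simp [dep]⟩]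
    simp [dep]

lemma edist_to_center_le (u : SpiderV ℓ) : (spider ℓ).edist u none ≤ (dep u : ℕ∞) := by
  match u with
  | none => simp [dep]
  | some a =>
    have h : legOf (some a : SpiderV ℓ) = some a.1 := rfl
    have := chain_edist_le (G := spider ℓ) (chainMap ℓ a.1) 0 (dep (some a))
      (by omega) (fun i _ h2 => chainMap_adj (by simp [dep] at h2 ⊢; omega))
    rw [chainMap_zero, chainMap_of_mem h] at this
    simpa [edist_comm] using this

lemma edist_same_leg_le {u v : SpiderV ℓ} {l : Fin 3} (hu : legOf u = some l)
    (hv : legOf v = some l) (huv : dep u ≤ dep v) :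
    (spider ℓ).edist u v ≤ ((dep v - dep u : ℕ) : ℕ∞) := by
  have hvl : dep v ≤ ℓ l := by
    match v, hv with
    | some a, hv =>
      simp only [legOf, Option.some_inj] at hv
      subst hv
      simp [dep]
  have := chain_edist_le (G := spider ℓ) (chainMap ℓ l) (dep u) (dep v) huv
    (fun i _ h2 => chainMap_adj (by omega))
  rwa [chainMap_of_mem hu, chainMap_of_mem hv] at this

end Spider
namespace Spider

variable {ℓ : Fin 3 → ℕ}

def Ddist (u v : SpiderV ℓ) : ℕ :=
  if legOf u = legOf v ∨ u = none ∨ v = none then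
    max (dep u) (dep v) - min (dep u) (dep v)
  else dep u + dep v

lemma Ddist_comm (u v : SpiderV ℓ) : Ddist u v = Ddist v u := by
  unfold Ddist
  split_ifs with h1 h2 h2 <;> try omega
  · exact absurd (by tauto) h2
  · exact absurd (by tauto) h1

def pot (l : Fin 3) : SpiderV ℓ → ℤ := fun v =>
  if legOf v = some l then (dep v : ℤ) else -(dep v : ℤ)

lemma legOf_eq_none_iff {u : SpiderV ℓ} : legOf u = none ↔ u = none := by
  cases u <;> simp [legOf]

lemma pot_lipschitz (l : Fin 3) :
    ∀ u v : SpiderV ℓ, (spider ℓ).Adj u v → |pot l u - pot l v| ≤ 1 := by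
  intro u v h
  obtain ⟨h1, h2⟩ := h
  rw [abs_le]
  have hun : u = none → dep u = 0 := fun h => by simp [h, dep]
  have hvn : v = none → dep v = 0 := fun h => by simp [h, dep]
  unfold pot
  split_ifs with ha hb hb
  · push_cast; omega
  · have : u = none ∨ v = none := by
      rcases h1 with h1 | h1 | h1
      · exact absurd (h1 ▸ ha) hb
      · exact Or.inl h1
      · exact Or.inr h1
    rcases this with h | h
    · subst h; simp [legOf] at ha
    · have := hvn h; push_cast; omega
  · have : u = none ∨ v = none := by
      rcases h1 with h1 | h1 | h1
      · exact absurd (h1 ▸ hb) ha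
      · exact Or.inl h1
      · exact Or.inr h1
    rcases this with h | h
    · have := hun h; push_cast; omega
    · subst h; simp [legOf] at hb
  · push_cast; omega

lemma le_abs_of_or {A B : ℤ} (h : A ≤ B ∨ A ≤ -B) : A ≤ |B| := by
  rcases h with h | h
  · exact le_trans h (le_abs_self _)
  · exact le_trans h (neg_le_abs _)

lemma Ddist_le_edist_some (a : Σ l : Fin 3, Fin (ℓ l)) (v : SpiderV ℓ) :
    (Ddist (some a) v : ℕ∞) ≤ (spider ℓ).edist (some a) v := by
  have h := pot_le_edist (pot a.1) (pot_lipschitz a.1) ((some a : SpiderV ℓ)) v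
  refine le_trans ?_ h
  rw [Nat.cast_le]
  have hz : ((Ddist (some a) v : ℕ) : ℤ) ≤ |pot a.1 (some a) - pot a.1 v| := by
    apply le_abs_of_or
    have e1 : pot a.1 (some a : SpiderV ℓ) = ((a.2.val + 1 : ℕ) : ℤ) := by
      simp [pot, legOf, dep]
    match v with
    | none =>
      have e2 : pot a.1 (none : SpiderV ℓ) = 0 := by
        simp [pot, legOf, dep]
      have e3 : Ddist (some a : SpiderV ℓ) none = a.2.val + 1 := by
        simp [Ddist, legOf, dep]
      rw [e1, e2, e3]
      omega
    | some b =>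
      by_cases hab : b.1 = a.1
      · have e2 : pot a.1 (some b : SpiderV ℓ) = ((b.2.val + 1 : ℕ) : ℤ) := by
          simp [pot, legOf, dep, hab]
        have e3 : Ddist (some a : SpiderV ℓ) (some b) =
            max (a.2.val + 1) (b.2.val + 1) - min (a.2.val + 1) (b.2.val + 1) := by
          simp [Ddist, legOf, dep, hab.symm]
        rw [e1, e2, e3]
        omega
      · have e2 : pot a.1 (some b : SpiderV ℓ) = -((b.2.val + 1 : ℕ) : ℤ) := by
          simp [pot, legOf, dep, hab]
        have hne : ¬(legOf (some a : SpiderV ℓ) = legOf (some b) ∨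
            (some a : SpiderV ℓ) = none ∨ (some b : SpiderV ℓ) = none) := by
          simp only [legOf, Option.some_inj]
          push_neg
          exact ⟨fun h => hab h.symm, by simp, by simp⟩
        have e3 : Ddist (some a : SpiderV ℓ) (some b) = (a.2.val + 1) + (b.2.val + 1) := by
          rw [Ddist, if_neg hne]; rfl
        rw [e1, e2, e3]
        omega
  have := Int.toNat_le_toNat hz
  rwa [Int.toNat_natCast] at this

lemma Ddist_le_edist (u v : SpiderV ℓ) : (Ddist u v : ℕ∞) ≤ (spider ℓ).edist u v := by
  match u, v with
  | none, none => simp [Ddist, dep]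
  | some a, v => exact Ddist_le_edist_some a v
  | none, some b =>
    rw [edist_comm, Ddist_comm]
    exact Ddist_le_edist_some b none

lemma edist_le_Ddist (u v : SpiderV ℓ) : (spider ℓ).edist u v ≤ (Ddist u v : ℕ∞) := by
  by_cases h1 : legOf u = legOf v ∨ u = none ∨ v = none
  · rcases h1 with h1 | h1 | h1
    · match u, v, h1 with
      | none, none, _ => simp
      | none, some b, h1 => simp [legOf] at h1
      | some a, none, h1 => simp [legOf] at h1
      | some a, some b, h1 =>
        simp only [legOf, Option.some_inj] at h1
        rcases le_total (dep (some a : SpiderV ℓ)) (dep (some b : SpiderV ℓ)) with h | h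
        · have := edist_same_leg_le (l := b.1) (by simp [legOf, h1]) (by simp [legOf]) h
          refine le_trans this ?_
          rw [Nat.cast_le, Ddist, if_pos (by simp [legOf, h1])]
          omega
        · rw [edist_comm]
          have := edist_same_leg_le (l := b.1) (by simp [legOf]) (by simp [legOf, h1]) h
          refine le_trans this ?_
          rw [Nat.cast_le, Ddist_comm, Ddist, if_pos (by simp [legOf, h1])]
          omega
    · subst h1
      rw [edist_comm]
      refine le_trans (edist_to_center_le v) ?_
      rw [Nat.cast_le, Ddist, if_pos (by tauto)]
      simp [dep]
    · subst h1
      refine le_trans (edist_to_center_le u) ?_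
      rw [Nat.cast_le, Ddist, if_pos (by tauto)]
      simp [dep]
  · calc (spider ℓ).edist u v ≤ (spider ℓ).edist u none + (spider ℓ).edist none v :=
          SimpleGraph.edist_triangle
    _ ≤ (dep u : ℕ∞) + (dep v : ℕ∞) := by
        refine add_le_add (edist_to_center_le u) ?_
        rw [edist_comm]; exact edist_to_center_le v
    _ = ((dep u + dep v : ℕ) : ℕ∞) := by push_cast; rfl
    _ = (Ddist u v : ℕ∞) := by rw [Ddist, if_neg h1]

lemma spider_edist (u v : SpiderV ℓ) : (spider ℓ).edist u v = (Ddist u v : ℕ∞) :=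
  le_antisymm (edist_le_Ddist u v) (Ddist_le_edist u v)

lemma spider_connected : (spider ℓ).Connected := by
  have hreach : ∀ u : SpiderV ℓ, (spider ℓ).Reachable u none := by
    intro u
    apply SimpleGraph.reachable_of_edist_ne_top
    have := edist_to_center_le u
    intro htop
    rw [htop] at this
    exact (by simp : ¬ (⊤ : ℕ∞) ≤ (dep u : ℕ∞)) this
  exact ⟨fun u v => (hreach u).trans (hreach v).symm⟩

lemma spider_isAcyclic : (spider ℓ).IsAcyclic := by
  apply isAcyclic_of_height (spider ℓ) dep
  · intro u v h
    obtain ⟨_, h2⟩ := h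
    omega
  · intro u v w huv huw hv hw
    obtain ⟨h1v, h2v⟩ := huv
    obtain ⟨h1w, h2w⟩ := huw
    have hdvw : dep v = dep w := by omega
    have hun : u ≠ none := by
      intro h; rw [← dep_eq_zero_iff] at h; omega
    rcases h1v with h1v | h1v | h1v
    · rcases h1w with h1w | h1w | h1w
      · exact eq_of_legOf_dep (h1v ▸ h1w) hdvw
      · exact absurd h1w hun
      · subst h1w
        have hz : dep v = 0 := by simpa [dep] using hdvw
        rw [dep_eq_zero_iff] at hz
        exact hz
    · exact absurd h1v hun
    · subst h1v
      have hz : dep w = 0 := by simpa [dep] using hdvw.symm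
      rw [dep_eq_zero_iff] at hz
      rw [hz]

lemma spider_isTree : (spider ℓ).IsTree := ⟨spider_connected, spider_isAcyclic⟩

end Spider
section Tadpole

abbrev TadV (k : ℕ) : Type := ZMod (3 * k + 3) ⊕ Fin (k + 1)

instance tadNeZero (k : ℕ) : NeZero (3 * k + 3) := ⟨by omega⟩

def tadpole (k : ℕ) : SimpleGraph (TadV k) where
  Adj u v := match u, v with
    | .inl x, .inl y => x + 1 = y ∨ y + 1 = x
    | .inl x, .inr j => x = 0 ∧ j.val = 0
    | .inr j, .inl x => x = 0 ∧ j.val = 0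
    | .inr i, .inr j => i.val + 1 = j.val ∨ j.val + 1 = i.val
  symm := by
    constructor
    rintro (x | i) (y | j) h <;> simp_all <;> tauto
  loopless := by
    have hone : ((1 : ℕ) : ZMod (3 * k + 3)).val = 1 :=
      ZMod.val_cast_of_lt (by omega)
    constructor
    rintro (x | i) h
    · rcases h with h | h <;>
      · have h1 : (1 : ZMod (3 * k + 3)) = 0 := by
          have := congrArg (fun z => z - x) h
          simpa using this
        rw [show (1 : ZMod (3*k+3)) = ((1:ℕ) : ZMod (3*k+3)) by push_cast; rfl] at h1
        rw [h1] at hone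
        simp at hone
    · simp only [Sum.inr.injEq] at h ⊢
      omega

variable {k : ℕ}

lemma tad_adj_inl {x y : ZMod (3*k+3)} :
    (tadpole k).Adj (.inl x) (.inl y) ↔ (x + 1 = y ∨ y + 1 = x) := Iff.rfl

def tpot : TadV k → ℤ
  | .inl c => (cdist c 0 : ℤ)
  | .inr j => -(j.val + 1 : ℤ)

def apot (a : ZMod (3*k+3)) : TadV k → ℤ
  | .inl c => (cdist c a : ℤ)
  | .inr j => (cdist 0 a : ℤ) + (j.val + 1 : ℤ)

lemma cdist_of_adj {x y : ZMod (3*k+3)} (h : x + 1 = y ∨ y + 1 = x) : cdist x y ≤ 1 := by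
  rcases h with h | h
  · rw [← h]; exact cdist_add_one x
  · rw [← h, cdist_comm]; exact cdist_add_one y

lemma tpot_lipschitz : ∀ u v : TadV k, (tadpole k).Adj u v → |tpot u - tpot v| ≤ 1 := by
  rintro (x | i) (y | j) h
  · have h1 := cdist_triangle x y (0 : ZMod (3*k+3))
    have h2 := cdist_triangle y x (0 : ZMod (3*k+3))
    have h3 := cdist_of_adj h
    have h4 : cdist y x ≤ 1 := by rwa [cdist_comm]
    simp only [tpot]
    rw [abs_le]
    omega
  · obtain ⟨hx, hj⟩ := h
    subst hx
    simp only [tpot, hj, cdist_self]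
    norm_num
  · obtain ⟨hx, hj⟩ := h
    subst hx
    simp only [tpot, hj, cdist_self]
    norm_num
  · simp only [tpot]
    rw [abs_le]
    rcases h with h | h <;> push_cast <;> omega

lemma apot_lipschitz (a : ZMod (3*k+3)) :
    ∀ u v : TadV k, (tadpole k).Adj u v → |apot a u - apot a v| ≤ 1 := by
  rintro (x | i) (y | j) h
  · have h1 := cdist_triangle x y a
    have h2 := cdist_triangle y x a
    have h3 := cdist_of_adj h
    have h4 : cdist y x ≤ 1 := by rwa [cdist_comm]
    simp only [apot]
    rw [abs_le]
    omega
  · obtain ⟨hx, hj⟩ := h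
    subst hx
    simp only [apot, hj]
    norm_num
  · obtain ⟨hx, hj⟩ := h
    subst hx
    simp only [apot, hj]
    norm_num
  · simp only [apot]
    rw [abs_le]
    rcases h with h | h <;> push_cast <;> omega

lemma nat_le_abs_toNat {A : ℕ} {B : ℤ} (h : (A : ℤ) ≤ B ∨ (A : ℤ) ≤ -B) :
    A ≤ |B|.toNat := by
  have h2 : (A : ℤ) ≤ |B| := by
    rcases h with h | h
    · exact le_trans h (le_abs_self _)
    · exact le_trans h (neg_le_abs _)
  have := Int.toNat_le_toNat h2
  rwa [Int.toNat_natCast] at this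

lemma tad_lb_pp (i j : Fin (k+1)) :
    ((max i.val j.val - min i.val j.val : ℕ) : ℕ∞) ≤
      (tadpole k).edist (.inr i) (.inr j) := by
  have h := pot_le_edist tpot tpot_lipschitz (Sum.inr i : TadV k) (Sum.inr j)
  refine le_trans ?_ h
  rw [Nat.cast_le]
  apply nat_le_abs_toNat
  simp only [tpot]
  omega

lemma tad_lb_pc (c : ZMod (3*k+3)) (j : Fin (k+1)) :
    ((cdist c 0 + (j.val + 1) : ℕ) : ℕ∞) ≤ (tadpole k).edist (.inl c) (.inr j) := by
  have h := pot_le_edist tpot tpot_lipschitz (Sum.inl c : TadV k) (Sum.inr j)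
  refine le_trans ?_ h
  rw [Nat.cast_le]
  apply nat_le_abs_toNat
  simp only [tpot]
  omega

lemma tad_lb_cc (x y : ZMod (3*k+3)) :
    ((cdist x y : ℕ) : ℕ∞) ≤ (tadpole k).edist (.inl x) (.inl y) := by
  have h := pot_le_edist (apot y) (apot_lipschitz y) (Sum.inl x : TadV k) (Sum.inl y)
  refine le_trans ?_ h
  rw [Nat.cast_le]
  apply nat_le_abs_toNat
  simp only [apot, cdist_self]
  omega

end Tadpole
section Embed

open Spider

variable {k : ℕ}

lemma zmod_cast_succ {L : ℕ} (a : ℕ) : ((a : ℕ) : ZMod L) + 1 = ((a + 1 : ℕ) : ZMod L) := by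
  push_cast; ring

lemma cdist_eval' {L : ℕ} [NeZero L] (a b : ℕ) (ha : a < L) (hb : b < L) :
    cdist (a : ZMod L) (b : ZMod L) =
      min (max a b - min a b) (L - (max a b - min a b)) := by
  rcases le_total a b with h | h
  · rw [cdist_eval a b h hb]
    congr 1 <;> omega
  · rw [cdist_comm, cdist_eval b a h ha]
    congr 1 <;> omega

namespace Spider

variable {ℓ : Fin 3 → ℕ}

lemma Ddist_none_some (a : Σ l : Fin 3, Fin (ℓ l)) :
    Ddist (none : SpiderV ℓ) (some a) = a.2.val + 1 := by
  rw [Ddist, if_pos (by tauto)]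
  simp [dep]

lemma Ddist_some_some_same {a b : Σ l : Fin 3, Fin (ℓ l)} (h : a.1 = b.1) :
    Ddist (some a : SpiderV ℓ) (some b) =
      max (a.2.val + 1) (b.2.val + 1) - min (a.2.val + 1) (b.2.val + 1) := by
  rw [Ddist, if_pos (Or.inl (by simp [legOf, h]))]
  simp [dep]

lemma Ddist_some_some_diff {a b : Σ l : Fin 3, Fin (ℓ l)} (h : a.1 ≠ b.1) :
    Ddist (some a : SpiderV ℓ) (some b) = (a.2.val + 1) + (b.2.val + 1) := by
  rw [Ddist, if_neg]
  · rfl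
  · simp only [legOf, Option.some_inj]
    push_neg
    exact ⟨h, by simp, by simp⟩

lemma Ddist_none_none : Ddist (none : SpiderV ℓ) none = 0 := by
  simp [Ddist, dep]

end Spider

/-- The spider with three legs of length `k+1`. -/
abbrev SpV (k : ℕ) : Type := SpiderV (fun _ : Fin 3 => k + 1)

def phiS (k : ℕ) : SpV k → TadV k
  | none => .inl 0
  | some ⟨⟨0, _⟩, j⟩ => .inl ((j.val + 1 : ℕ) : ZMod (3*k+3))
  | some ⟨⟨1, _⟩, j⟩ => .inl ((3*k+2 - j.val : ℕ) : ZMod (3*k+3))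
  | some ⟨⟨_+2, _⟩, j⟩ => .inr j

lemma val_cast_lt {a : ℕ} (ha : a < 3*k+3) : ((a : ℕ) : ZMod (3*k+3)).val = a :=
  ZMod.val_cast_of_lt ha

lemma inl_cast_inj {a b : ℕ} (ha : a < 3*k+3) (hb : b < 3*k+3)
    (h : (Sum.inl ((a : ℕ) : ZMod (3*k+3)) : TadV k) = Sum.inl ((b : ℕ) : ZMod (3*k+3))) :
    a = b := by
  have h2 := congrArg ZMod.val (Sum.inl_injective h)
  rwa [val_cast_lt ha, val_cast_lt hb] at h2

lemma zero_eq_cast_zero : (0 : ZMod (3*k+3)) = ((0 : ℕ) : ZMod (3*k+3)) := by norm_num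

lemma inl_zero_cast_inj {b : ℕ} (hb : b < 3*k+3)
    (h : (Sum.inl (0 : ZMod (3*k+3)) : TadV k) = Sum.inl ((b : ℕ) : ZMod (3*k+3))) :
    0 = b := by
  have h2 := congrArg ZMod.val (Sum.inl_injective h)
  rwa [ZMod.val_zero, val_cast_lt hb] at h2

lemma phiS_inj : Function.Injective (phiS k) := by
  rintro (_ | ⟨⟨lu, hlu⟩, i⟩) (_ | ⟨⟨lv, hlv⟩, j⟩) h
  · rfl
  · have hj : (j : ℕ) < k + 1 := j.isLt
    exfalso
    interval_cases lv <;> simp only [phiS] at h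
    · have := inl_zero_cast_inj (by omega) h; omega
    · have := inl_zero_cast_inj (by omega) h; omega
    · exact Sum.inl_ne_inr h
  · have hi : (i : ℕ) < k + 1 := i.isLt
    exfalso
    interval_cases lu <;> simp only [phiS] at h
    · have := (inl_zero_cast_inj (by omega) h.symm); omega
    · have := (inl_zero_cast_inj (by omega) h.symm); omega
    · exact (Sum.inr_ne_inl h)
  · have hi : (i : ℕ) < k + 1 := i.isLt
    have hj : (j : ℕ) < k + 1 := j.isLt
    interval_cases lu <;> interval_cases lv <;> simp only [phiS] at h ⊢
    · have := inl_cast_inj (by omega) (by omega) h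
      have hij : i = j := Fin.ext (by omega)
      subst hij; rfl
    · exfalso; have := inl_cast_inj (by omega) (by omega) h; omega
    · exact absurd h (Sum.inl_ne_inr)
    · exfalso; have := inl_cast_inj (by omega) (by omega) h; omega
    · have := inl_cast_inj (by omega) (by omega) h
      have hij : i = j := Fin.ext (by omega)
      subst hij; rfl
    · exact absurd h (Sum.inl_ne_inr)
    · exact absurd h (Sum.inr_ne_inl)
    · exact absurd h (Sum.inr_ne_inl)
    · have hij : i = j := Sum.inr_injective h
      subst hij; rfl

end Embed
section EmbedS

open Spider

variable {k : ℕ}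

lemma isKIso_glue {V W : Type} {G : SimpleGraph V} {U : SimpleGraph W} (k : ℕ) (φ : V → W)
    (D : V → V → ℕ) (hinj : Function.Injective φ)
    (hhom : ∀ u v, G.Adj u v → U.Adj (φ u) (φ v))
    (hG : ∀ u v, G.edist u v = (D u v : ℕ∞))
    (hlb : ∀ u v, ((min (D u v) (k+1) : ℕ) : ℕ∞) ≤ U.edist (φ u) (φ v)) :
    IsKIsometricEmbedding k G U φ := by
  refine ⟨hinj, hhom, fun u v hle => ?_⟩
  have hub : U.edist (φ u) (φ v) ≤ G.edist u v := hom_edist_le φ hhom u v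
  refine le_antisymm ?_ hub
  rw [hG]
  rcases le_or_gt (D u v) k with h | h
  · have hmin : min (D u v) (k+1) = D u v := by omega
    have h2 := hlb u v
    rwa [hmin] at h2
  · exfalso
    have h1 : ((k+1 : ℕ) : ℕ∞) ≤ U.edist (φ u) (φ v) := by
      have h2 := hlb u v
      rwa [show min (D u v) (k+1) = k+1 by omega] at h2
    have h2 : ((k+1 : ℕ) : ℕ∞) ≤ ((k : ℕ) : ℕ∞) := le_trans h1 hle
    rw [Nat.cast_le] at h2
    omega

lemma phiS_hom : ∀ u v : SpV k, (spider (fun _ : Fin 3 => k+1)).Adj u v →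
    (tadpole k).Adj (phiS k u) (phiS k v) := by
  rintro (_ | ⟨⟨lu, hlu⟩, i⟩) (_ | ⟨⟨lv, hlv⟩, j⟩) ⟨h1, h2⟩
  · simp [Spider.dep] at h2
  · simp only [Spider.dep] at h2
    have hj0 : (j : ℕ) = 0 := by omega
    interval_cases lv <;> simp only [phiS]
    · left
      rw [hj0]
      norm_num
    · right
      rw [hj0, zmod_cast_succ, show 3*k+2-0+1 = 3*k+3 by omega, ZMod.natCast_self]
    · exact ⟨rfl, hj0⟩
  · simp only [Spider.dep] at h2
    have hi0 : (i : ℕ) = 0 := by omega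
    interval_cases lu <;> simp only [phiS]
    · right
      rw [hi0]
      norm_num
    · left
      rw [hi0, zmod_cast_succ, show 3*k+2-0+1 = 3*k+3 by omega, ZMod.natCast_self]
    · exact ⟨rfl, hi0⟩
  · have hl : lu = lv := by
      rcases h1 with h1 | h1 | h1
      · simpa [Spider.legOf] using congrArg (fun o => (Option.map Fin.val o).getD 7) h1
      · simp at h1
      · simp at h1
    subst hl
    simp only [Spider.dep] at h2
    have hi : (i : ℕ) < k + 1 := i.isLt
    have hj : (j : ℕ) < k + 1 := j.isLt
    interval_cases lu <;> simp only [phiS]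
    · rcases h2 with h2 | h2
      · right
        rw [zmod_cast_succ]
        exact congrArg _ (by omega)
      · left
        rw [zmod_cast_succ]
        exact congrArg _ (by omega)
    · rcases h2 with h2 | h2
      · left
        rw [zmod_cast_succ]
        exact congrArg _ (by omega)
      · right
        rw [zmod_cast_succ]
        exact congrArg _ (by omega)
    · show (i : ℕ) + 1 = (j : ℕ) ∨ (j : ℕ) + 1 = (i : ℕ)
      omega

lemma phiS_lb : ∀ u v : SpV k, ((min (Ddist u v) (k+1) : ℕ) : ℕ∞) ≤
    (tadpole k).edist (phiS k u) (phiS k v) := by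
  have fne01 : (⟨0, by omega⟩ : Fin 3) ≠ ⟨1, by omega⟩ := by
    intro hh; exact absurd (congrArg Fin.val hh) (by norm_num)
  have fne02 : (⟨0, by omega⟩ : Fin 3) ≠ ⟨2, by omega⟩ := by
    intro hh; exact absurd (congrArg Fin.val hh) (by norm_num)
  have fne12 : (⟨1, by omega⟩ : Fin 3) ≠ ⟨2, by omega⟩ := by
    intro hh; exact absurd (congrArg Fin.val hh) (by norm_num)
  rintro (_ | ⟨⟨lu, hlu⟩, i⟩) (_ | ⟨⟨lv, hlv⟩, j⟩)
  · rw [Ddist_none_none]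
    simp
  · have hj : (j : ℕ) < k + 1 := j.isLt
    rw [Ddist_none_some]
    interval_cases lv <;> simp only [phiS]
    · refine le_trans ?_ (tad_lb_cc 0 _)
      rw [Nat.cast_le, zero_eq_cast_zero, cdist_eval' 0 (j.val+1) (by omega) (by omega)]
      omega
    · refine le_trans ?_ (tad_lb_cc 0 _)
      rw [Nat.cast_le, zero_eq_cast_zero, cdist_eval' 0 (3*k+2-j.val) (by omega) (by omega)]
      omega
    · refine le_trans ?_ (tad_lb_pc 0 j)
      rw [Nat.cast_le, cdist_self]
      omega
  · have hi : (i : ℕ) < k + 1 := i.isLt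
    rw [Ddist_comm, Ddist_none_some]
    rw [SimpleGraph.edist_comm]
    interval_cases lu <;> simp only [phiS]
    · refine le_trans ?_ (tad_lb_cc 0 _)
      rw [Nat.cast_le, zero_eq_cast_zero, cdist_eval' 0 (i.val+1) (by omega) (by omega)]
      omega
    · refine le_trans ?_ (tad_lb_cc 0 _)
      rw [Nat.cast_le, zero_eq_cast_zero, cdist_eval' 0 (3*k+2-i.val) (by omega) (by omega)]
      omega
    · refine le_trans ?_ (tad_lb_pc 0 i)
      rw [Nat.cast_le, cdist_self]
      omega
  · have hi : (i : ℕ) < k + 1 := i.isLt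
    have hj : (j : ℕ) < k + 1 := j.isLt
    interval_cases lu <;> interval_cases lv <;> simp only [phiS]
    · have hd : Ddist (some ⟨⟨0, hlu⟩, i⟩ : SpV k) (some ⟨⟨0, hlv⟩, j⟩) =
          max (i.val + 1) (j.val + 1) - min (i.val + 1) (j.val + 1) :=
        Ddist_some_some_same rfl
      rw [hd]
      refine le_trans ?_ (tad_lb_cc _ _)
      rw [Nat.cast_le, cdist_eval' (i.val+1) (j.val+1) (by omega) (by omega)]
      omega
    · have hd : Ddist (some ⟨⟨0, hlu⟩, i⟩ : SpV k) (some ⟨⟨1, hlv⟩, j⟩) =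
          (i.val + 1) + (j.val + 1) := Ddist_some_some_diff fne01
      rw [hd]
      refine le_trans ?_ (tad_lb_cc _ _)
      rw [Nat.cast_le, cdist_eval' (i.val+1) (3*k+2-j.val) (by omega) (by omega)]
      omega
    · have hd : Ddist (some ⟨⟨0, hlu⟩, i⟩ : SpV k) (some ⟨⟨2, hlv⟩, j⟩) =
          (i.val + 1) + (j.val + 1) := Ddist_some_some_diff fne02
      rw [hd]
      refine le_trans ?_ (tad_lb_pc _ _)
      rw [Nat.cast_le, cdist_comm, zero_eq_cast_zero,
        cdist_eval' 0 (i.val+1) (by omega) (by omega)]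
      omega
    · have hd : Ddist (some ⟨⟨1, hlu⟩, i⟩ : SpV k) (some ⟨⟨0, hlv⟩, j⟩) =
          (i.val + 1) + (j.val + 1) := Ddist_some_some_diff (Ne.symm fne01)
      rw [hd]
      refine le_trans ?_ (tad_lb_cc _ _)
      rw [Nat.cast_le, cdist_eval' (3*k+2-i.val) (j.val+1) (by omega) (by omega)]
      omega
    · have hd : Ddist (some ⟨⟨1, hlu⟩, i⟩ : SpV k) (some ⟨⟨1, hlv⟩, j⟩) =
          max (i.val + 1) (j.val + 1) - min (i.val + 1) (j.val + 1) :=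
        Ddist_some_some_same rfl
      rw [hd]
      refine le_trans ?_ (tad_lb_cc _ _)
      rw [Nat.cast_le, cdist_eval' (3*k+2-i.val) (3*k+2-j.val) (by omega) (by omega)]
      omega
    · have hd : Ddist (some ⟨⟨1, hlu⟩, i⟩ : SpV k) (some ⟨⟨2, hlv⟩, j⟩) =
          (i.val + 1) + (j.val + 1) := Ddist_some_some_diff fne12
      rw [hd]
      refine le_trans ?_ (tad_lb_pc _ _)
      rw [Nat.cast_le, cdist_comm, zero_eq_cast_zero,
        cdist_eval' 0 (3*k+2-i.val) (by omega) (by omega)]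
      omega
    · have hd : Ddist (some ⟨⟨2, hlu⟩, i⟩ : SpV k) (some ⟨⟨0, hlv⟩, j⟩) =
          (i.val + 1) + (j.val + 1) := Ddist_some_some_diff (Ne.symm fne02)
      rw [hd]
      rw [SimpleGraph.edist_comm]
      refine le_trans ?_ (tad_lb_pc _ _)
      rw [Nat.cast_le, cdist_comm, zero_eq_cast_zero,
        cdist_eval' 0 (j.val+1) (by omega) (by omega)]
      omega
    · have hd : Ddist (some ⟨⟨2, hlu⟩, i⟩ : SpV k) (some ⟨⟨1, hlv⟩, j⟩) =
          (i.val + 1) + (j.val + 1) := Ddist_some_some_diff (Ne.symm fne12)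
      rw [hd]
      rw [SimpleGraph.edist_comm]
      refine le_trans ?_ (tad_lb_pc _ _)
      rw [Nat.cast_le, cdist_comm, zero_eq_cast_zero,
        cdist_eval' 0 (3*k+2-j.val) (by omega) (by omega)]
      omega
    · have hd : Ddist (some ⟨⟨2, hlu⟩, i⟩ : SpV k) (some ⟨⟨2, hlv⟩, j⟩) =
          max (i.val + 1) (j.val + 1) - min (i.val + 1) (j.val + 1) :=
        Ddist_some_some_same rfl
      rw [hd]
      refine le_trans ?_ (tad_lb_pp i j)
      rw [Nat.cast_le]
      omega

lemma phiS_isKIso : IsKIsometricEmbedding k (spider (fun _ : Fin 3 => k+1)) (tadpole k) (phiS k) :=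
  isKIso_glue k (phiS k) Ddist phiS_inj phiS_hom spider_edist phiS_lb

end EmbedS
section EmbedP

open Spider

variable {k : ℕ}

/-- leg lengths realizing a path with `3k+4` vertices -/
abbrev lP (k : ℕ) : Fin 3 → ℕ := fun l => if l.val = 0 then 2*k+2 else if l.val = 1 then k+1 else 0

abbrev PaV (k : ℕ) : Type := SpiderV (lP k)

def phiP (k : ℕ) : PaV k → TadV k
  | none => .inl 0
  | some ⟨⟨0, _⟩, j⟩ => .inl ((j.val + 1 : ℕ) : ZMod (3*k+3))
  | some ⟨⟨1, _⟩, j⟩ => .inr ⟨j.val, j.isLt⟩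
  | some ⟨⟨_+2, _⟩, j⟩ => Fin.elim0 j

lemma phiP_inj : Function.Injective (phiP k) := by
  rintro (_ | ⟨⟨lu, hlu⟩, i⟩) (_ | ⟨⟨lv, hlv⟩, j⟩) h
  · rfl
  · exfalso
    interval_cases lv
    · have hj : (j : ℕ) < 2*k+2 := j.isLt
      simp only [phiP] at h
      have := inl_zero_cast_inj (by omega) h
      omega
    · exact Sum.inl_ne_inr (by simpa only [phiP] using h)
    · exact Fin.elim0 j
  · exfalso
    interval_cases lu
    · have hi : (i : ℕ) < 2*k+2 := i.isLt
      simp only [phiP] at h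
      have := inl_zero_cast_inj (by omega) h.symm
      omega
    · exact Sum.inr_ne_inl (by simpa only [phiP] using h)
    · exact Fin.elim0 i
  · interval_cases lu <;> interval_cases lv <;> (try exact Fin.elim0 i) <;> (try exact Fin.elim0 j)
    · have hi : (i : ℕ) < 2*k+2 := i.isLt
      have hj : (j : ℕ) < 2*k+2 := j.isLt
      simp only [phiP] at h
      have := inl_cast_inj (by omega) (by omega) h
      have hij : i = j := Fin.ext (by omega)
      subst hij; rfl
    · exact absurd (by simpa only [phiP] using h) Sum.inl_ne_inr
    · exact absurd (by simpa only [phiP] using h) Sum.inr_ne_inl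
    · simp only [phiP] at h
      have h2 := congrArg Fin.val (Sum.inr_injective h)
      have hij : i = j := Fin.ext h2
      subst hij; rfl

lemma phiP_hom : ∀ u v : PaV k, (spider (lP k)).Adj u v →
    (tadpole k).Adj (phiP k u) (phiP k v) := by
  rintro (_ | ⟨⟨lu, hlu⟩, i⟩) (_ | ⟨⟨lv, hlv⟩, j⟩) ⟨h1, h2⟩
  · simp [Spider.dep] at h2
  · simp only [Spider.dep] at h2
    have hj0 : (j : ℕ) = 0 := by omega
    interval_cases lv
    · simp only [phiP]
      left
      rw [hj0]
      norm_num
    · exact ⟨rfl, hj0⟩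
    · exact Fin.elim0 j
  · simp only [Spider.dep] at h2
    have hi0 : (i : ℕ) = 0 := by omega
    interval_cases lu
    · simp only [phiP]
      right
      rw [hi0]
      norm_num
    · exact ⟨rfl, hi0⟩
    · exact Fin.elim0 i
  · have hl : lu = lv := by
      rcases h1 with h1 | h1 | h1
      · simpa [Spider.legOf] using congrArg (fun o => (Option.map Fin.val o).getD 7) h1
      · simp at h1
      · simp at h1
    subst hl
    simp only [Spider.dep] at h2
    interval_cases lu
    · have hi : (i : ℕ) < 2*k+2 := i.isLt
      have hj : (j : ℕ) < 2*k+2 := j.isLt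
      simp only [phiP]
      rcases h2 with h2 | h2
      · right
        rw [zmod_cast_succ]
        exact congrArg _ (by omega)
      · left
        rw [zmod_cast_succ]
        exact congrArg _ (by omega)
    · show (i : ℕ) + 1 = (j : ℕ) ∨ (j : ℕ) + 1 = (i : ℕ)
      omega
    · exact Fin.elim0 i

lemma phiP_lb : ∀ u v : PaV k, ((min (Ddist u v) (k+1) : ℕ) : ℕ∞) ≤
    (tadpole k).edist (phiP k u) (phiP k v) := by
  rintro (_ | ⟨⟨lu, hlu⟩, i⟩) (_ | ⟨⟨lv, hlv⟩, j⟩)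
  · rw [Ddist_none_none]; simp
  · rw [Ddist_none_some]
    interval_cases lv
    · have hj : (j : ℕ) < 2*k+2 := j.isLt
      simp only [phiP]
      refine le_trans ?_ (tad_lb_cc 0 _)
      rw [Nat.cast_le, zero_eq_cast_zero, cdist_eval' 0 (j.val+1) (by omega) (by omega)]
      omega
    · simp only [phiP]
      refine le_trans ?_ (tad_lb_pc 0 _)
      rw [Nat.cast_le, cdist_self]
      simp only []
      omega
    · exact Fin.elim0 j
  · rw [Ddist_comm, Ddist_none_some, SimpleGraph.edist_comm]
    interval_cases lu
    · have hi : (i : ℕ) < 2*k+2 := i.isLt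
      simp only [phiP]
      refine le_trans ?_ (tad_lb_cc 0 _)
      rw [Nat.cast_le, zero_eq_cast_zero, cdist_eval' 0 (i.val+1) (by omega) (by omega)]
      omega
    · simp only [phiP]
      refine le_trans ?_ (tad_lb_pc 0 _)
      rw [Nat.cast_le, cdist_self]
      simp only []
      omega
    · exact Fin.elim0 i
  · interval_cases lu <;> interval_cases lv <;> (try exact Fin.elim0 i) <;> (try exact Fin.elim0 j)
    · have hi : (i : ℕ) < 2*k+2 := i.isLt
      have hj : (j : ℕ) < 2*k+2 := j.isLt
      have hd : Ddist (some ⟨⟨0, hlu⟩, i⟩ : PaV k) (some ⟨⟨0, hlv⟩, j⟩) =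
          max (i.val + 1) (j.val + 1) - min (i.val + 1) (j.val + 1) :=
        Ddist_some_some_same rfl
      simp only [phiP]
      rw [hd]
      refine le_trans ?_ (tad_lb_cc _ _)
      rw [Nat.cast_le, cdist_eval' (i.val+1) (j.val+1) (by omega) (by omega)]
      omega
    · have hi : (i : ℕ) < 2*k+2 := i.isLt
      have hj : (j : ℕ) < k+1 := j.isLt
      have hd : Ddist (some ⟨⟨0, hlu⟩, i⟩ : PaV k) (some ⟨⟨1, hlv⟩, j⟩) =
          (i.val + 1) + (j.val + 1) :=
        Ddist_some_some_diff (fun hh => absurd (congrArg Fin.val hh) (by norm_num))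
      simp only [phiP]
      rw [hd]
      refine le_trans ?_ (tad_lb_pc _ ⟨j.val, j.isLt⟩)
      rw [Nat.cast_le, cdist_comm, zero_eq_cast_zero,
        cdist_eval' 0 (i.val+1) (by omega) (by omega)]
      simp only []
      omega
    · have hi : (i : ℕ) < k+1 := i.isLt
      have hj : (j : ℕ) < 2*k+2 := j.isLt
      have hd : Ddist (some ⟨⟨1, hlu⟩, i⟩ : PaV k) (some ⟨⟨0, hlv⟩, j⟩) =
          (i.val + 1) + (j.val + 1) :=
        Ddist_some_some_diff (fun hh => absurd (congrArg Fin.val hh) (by norm_num))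
      simp only [phiP]
      rw [hd, SimpleGraph.edist_comm]
      refine le_trans ?_ (tad_lb_pc _ ⟨i.val, i.isLt⟩)
      rw [Nat.cast_le, cdist_comm, zero_eq_cast_zero,
        cdist_eval' 0 (j.val+1) (by omega) (by omega)]
      simp only []
      omega
    · have hd : Ddist (some ⟨⟨1, hlu⟩, i⟩ : PaV k) (some ⟨⟨1, hlv⟩, j⟩) =
          max (i.val + 1) (j.val + 1) - min (i.val + 1) (j.val + 1) :=
        Ddist_some_some_same rfl
      simp only [phiP]
      rw [hd]
      refine le_trans ?_ (tad_lb_pp ⟨i.val, i.isLt⟩ ⟨j.val, j.isLt⟩)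
      rw [Nat.cast_le]
      simp only []
      omega

lemma phiP_isKIso : IsKIsometricEmbedding k (spider (lP k)) (tadpole k) (phiP k) :=
  isKIso_glue k (phiP k) Ddist phiP_inj phiP_hom spider_edist phiP_lb

lemma tadpole_universal :
    IsKIsoUniversalPair k (spider (lP k)) (spider (fun _ : Fin 3 => k+1)) (tadpole k) :=
  ⟨⟨phiP k, phiP_isKIso⟩, ⟨phiS k, phiS_isKIso⟩⟩

end EmbedP
section TreeLB

open Spider

variable {k : ℕ}

lemma tree_path_length {X : Type} {T : SimpleGraph X} (hT : T.IsTree) {a b : X}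
    (q : T.Walk a b) (hq : q.IsPath) : (q.length : ℕ∞) = T.edist a b := by
  letI := Classical.decEq X
  obtain ⟨r, hr⟩ := (hT.isConnected a b).exists_walk_length_eq_edist
  have hrp : r.bypass.IsPath := r.bypass_isPath
  have hrlen : (r.bypass.length : ℕ∞) = T.edist a b := by
    refine le_antisymm ?_ (SimpleGraph.edist_le _)
    rw [← hr]
    exact_mod_cast Nat.cast_le.mpr r.length_bypass_le
  have huniq := hT.IsAcyclic.path_unique ⟨q, hq⟩ ⟨r.bypass, hrp⟩
  rw [← hrlen]
  exact congrArg _ (congrArg (fun p => SimpleGraph.Walk.length p.val) huniq)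

lemma tree_inj_hom_edist {V X : Type} {G : SimpleGraph V} {T : SimpleGraph X}
    (hG : G.Connected) (hT : T.IsTree) (f : V → X) (hinj : Function.Injective f)
    (hhom : ∀ u v, G.Adj u v → T.Adj (f u) (f v)) (u v : V) :
    T.edist (f u) (f v) = G.edist u v := by
  letI := Classical.decEq X
  letI := Classical.decEq V
  refine le_antisymm (hom_edist_le f hhom u v) ?_
  obtain ⟨p, hp⟩ := (hG u v).exists_walk_length_eq_edist
  have hbp : p.bypass.IsPath := p.bypass_isPath
  have hmap : (p.bypass.map (⟨f, fun a => hhom _ _ a⟩ : G →g T)).IsPath :=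
    SimpleGraph.Walk.map_isPath_of_injective (by intro a b hab; exact hinj hab) hbp
  have h1 : ((p.bypass.map (⟨f, fun a => hhom _ _ a⟩ : G →g T)).length : ℕ∞)
      = T.edist (f u) (f v) := tree_path_length hT _ hmap
  rw [← h1, SimpleGraph.Walk.length_map]
  exact SimpleGraph.edist_le _

def pos (k : ℕ) : PaV k → ℤ
  | none => (k : ℤ) + 1
  | some ⟨⟨0, _⟩, j⟩ => (k : ℤ) + 2 + j.val
  | some ⟨⟨1, _⟩, j⟩ => (k : ℤ) - j.val
  | some ⟨⟨_+2, _⟩, j⟩ => Fin.elim0 j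

lemma posd (u v : PaV k) :
    ((Ddist u v : ℕ) : ℤ) = pos k u - pos k v ∨ ((Ddist u v : ℕ) : ℤ) = pos k v - pos k u := by
  rcases u with _ | ⟨⟨lu, hlu⟩, i⟩ <;> rcases v with _ | ⟨⟨lv, hlv⟩, j⟩
  · rw [Ddist_none_none]; left; simp
  · rw [Ddist_none_some]
    interval_cases lv
    · right; simp only [pos]; push_cast; ring
    · left
      have hj : (j : ℕ) < k + 1 := j.isLt
      simp only [pos]; push_cast; omega
    · exact Fin.elim0 j
  · rw [Ddist_comm, Ddist_none_some]
    interval_cases lu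
    · left; simp only [pos]; push_cast; ring
    · right
      have hi : (i : ℕ) < k + 1 := i.isLt
      simp only [pos]; push_cast; omega
    · exact Fin.elim0 i
  · interval_cases lu <;> interval_cases lv <;> (try exact Fin.elim0 i) <;> (try exact Fin.elim0 j)
    · have hd : Ddist (some ⟨⟨0, hlu⟩, i⟩ : PaV k) (some ⟨⟨0, hlv⟩, j⟩) =
          max (i.val + 1) (j.val + 1) - min (i.val + 1) (j.val + 1) :=
        Ddist_some_some_same rfl
      rw [hd]; simp only [pos]; push_cast; omega
    · have hd : Ddist (some ⟨⟨0, hlu⟩, i⟩ : PaV k) (some ⟨⟨1, hlv⟩, j⟩) =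
          (i.val + 1) + (j.val + 1) :=
        Ddist_some_some_diff (fun hh => absurd (congrArg Fin.val hh) (by norm_num))
      rw [hd]; simp only [pos]; push_cast; omega
    · have hd : Ddist (some ⟨⟨1, hlu⟩, i⟩ : PaV k) (some ⟨⟨0, hlv⟩, j⟩) =
          (i.val + 1) + (j.val + 1) :=
        Ddist_some_some_diff (fun hh => absurd (congrArg Fin.val hh) (by norm_num))
      rw [hd]; simp only [pos]; push_cast; omega
    · have hd : Ddist (some ⟨⟨1, hlu⟩, i⟩ : PaV k) (some ⟨⟨1, hlv⟩, j⟩) =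
          max (i.val + 1) (j.val + 1) - min (i.val + 1) (j.val + 1) :=
        Ddist_some_some_same rfl
      rw [hd]; simp only [pos]; push_cast; omega

lemma card_PaV : Nat.card (PaV k) = 3*k+4 := by
  rw [Nat.card_eq_fintype_card]
  rw [Fintype.card_option, Fintype.card_sigma, Fin.sum_univ_three]
  simp only [Fintype.card_fin, lP]
  norm_num
  omega

lemma tree_lb {X : Type} [Finite X] {T : SimpleGraph X} (hT : T.IsTree)
    (φ : SpV k → X) (ψ : PaV k → X)
    (hφi : Function.Injective φ)
    (hφh : ∀ u v, (spider (fun _ : Fin 3 => k+1)).Adj u v → T.Adj (φ u) (φ v))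
    (hψi : Function.Injective ψ)
    (hψh : ∀ u v, (spider (lP k)).Adj u v → T.Adj (ψ u) (ψ v)) :
    4*k+5 ≤ Nat.card X := by
  classical
  have hφd : ∀ u v, T.edist (φ u) (φ v) = (Ddist u v : ℕ∞) := by
    intro u v
    rw [tree_inj_hom_edist spider_connected hT φ hφi hφh, spider_edist]
  have hψd : ∀ u v, T.edist (ψ u) (ψ v) = (Ddist u v : ℕ∞) := by
    intro u v
    rw [tree_inj_hom_edist spider_connected hT ψ hψi hψh, spider_edist]
  by_cases hleg : ∃ m : Fin 3, ∀ j : Fin (k+1), φ (some ⟨m, j⟩) ∉ Set.range ψ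
  · obtain ⟨m, hm⟩ := hleg
    have hinj : Function.Injective (Sum.elim ψ (fun j : Fin (k+1) => φ (some ⟨m, j⟩))) := by
      rintro (a | a) (b | b) h <;> simp only [Sum.elim_inl, Sum.elim_inr] at h
      · rw [hψi h]
      · exact absurd ⟨a, h⟩ (hm b)
      · exact absurd ⟨b, h.symm⟩ (hm a)
      · have := hφi h
        simp only [Option.some_inj] at this
        rw [show a = b from by
          have h2 := congrArg (fun s : (Σ l : Fin 3, Fin ((fun _ : Fin 3 => k+1) l)) => s.2.val) this
          exact Fin.ext h2]
    have hcard := Nat.card_le_card_of_injective _ hinj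
    rw [Nat.card_sum, card_PaV, Nat.card_eq_fintype_card, Fintype.card_fin] at hcard
    omega
  · push_neg at hleg
    obtain ⟨j0, v0, hv0⟩ := hleg 0
    obtain ⟨j1, v1, hv1⟩ := hleg 1
    obtain ⟨j2, v2, hv2⟩ := hleg 2
    exfalso
    have key : ∀ (m m' : Fin 3) (jm : Fin (k+1)) (jm' : Fin (k+1)) (vm vm' : PaV k),
        m ≠ m' → ψ vm = φ (some ⟨m, jm⟩) → ψ vm' = φ (some ⟨m', jm'⟩) →
        Ddist vm vm' = (jm.val + 1) + (jm'.val + 1) := by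
      intro m m' jm jm' vm vm' hne hvm hvm'
      have h1 := hψd vm vm'
      rw [hvm, hvm', hφd] at h1
      have h2 : Ddist (some ⟨m, jm⟩ : SpV k) (some ⟨m', jm'⟩) =
          (jm.val + 1) + (jm'.val + 1) := Ddist_some_some_diff hne
      rw [h2] at h1
      exact_mod_cast h1.symm
    have e01 := key 0 1 j0 j1 v0 v1 (by decide) hv0 hv1
    have e02 := key 0 2 j0 j2 v0 v2 (by decide) hv0 hv2
    have e12 := key 1 2 j1 j2 v1 v2 (by decide) hv1 hv2
    have p01 := posd v0 v1
    have p02 := posd v0 v2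
    have p12 := posd v1 v2
    rw [e01] at p01
    rw [e02] at p02
    rw [e12] at p12
    have hj0 : (j0 : ℕ) ≥ 0 := Nat.zero_le _
    rcases p01 with p01 | p01 <;> rcases p02 with p02 | p02 <;> rcases p12 with p12 | p12 <;>
      push_cast at p01 p02 p12 <;> omega

end TreeLB
section Main

open Spider

variable {k : ℕ}

lemma card_SpV : Nat.card (SpV k) = 3*k+4 := by
  rw [Nat.card_eq_fintype_card, Fintype.card_option, Fintype.card_sigma, Fin.sum_univ_three]
  simp only [Fintype.card_fin]
  omega

lemma card_TadV : Nat.card (TadV k) = 4*k+4 := by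
  rw [Nat.card_sum, Nat.card_eq_fintype_card, Nat.card_eq_fintype_card, ZMod.card,
    Fintype.card_fin]
  omega

end Main

/-- For every `n ≥ 8` there is a pair of trees, each with at most `n`
vertices, such that for `k = ⌊(n-8)/3⌋` every minimum `k`-isometric-universal graph for
this pair is not a tree. -/
theorem stmt_11 (n : ℕ) (hn : 8 ≤ n) :
    ∃ (V₁ V₂ : Type) (_ : Fintype V₁) (_ : Fintype V₂)
      (T₁ : SimpleGraph V₁) (T₂ : SimpleGraph V₂),
      T₁.IsTree ∧ T₂.IsTree ∧ Nat.card V₁ ≤ n ∧ Nat.card V₂ ≤ n ∧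
      ∀ (X : Type) (_ : Finite X) (U : SimpleGraph X),
        IsKIsoUniversalPair ((n - 8) / 3) T₁ T₂ U →
        (∀ (Y : Type) (_ : Finite Y) (U' : SimpleGraph Y),
          IsKIsoUniversalPair ((n - 8) / 3) T₁ T₂ U' → Nat.card X ≤ Nat.card Y) →
        ¬ U.IsTree := by
  set k := (n - 8) / 3 with hk
  have hdiv : 3 * k ≤ n - 8 := by
    rw [hk, mul_comm]
    exact Nat.div_mul_le_self (n - 8) 3
  refine ⟨PaV k, SpV k, inferInstance, inferInstance, Spider.spider (lP k),
    Spider.spider (fun _ : Fin 3 => k+1), Spider.spider_isTree, Spider.spider_isTree,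
    ?_, ?_, ?_⟩
  · rw [card_PaV]; omega
  · rw [card_SpV]; omega
  · intro X hfin U hU hmin
    haveI := hfin
    intro hTree
    have h1 : Nat.card X ≤ Nat.card (TadV k) :=
      hmin (TadV k) inferInstance (tadpole k) tadpole_universal
    rw [card_TadV] at h1
    obtain ⟨⟨ψ, hψi, hψh, -⟩, ⟨φ, hφi, hφh, -⟩⟩ := hU
    have h2 := tree_lb hTree φ ψ hφi hφh hψi hψh
    omega
end
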